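/- arXiv:1403.2991 — 5 statements merged into one kernel-verified Lean document; each statement's English description precedes it below -/
import Mathlib

section
/- Let A be an ε-compatible family of affine maps over E ⊂ ℝⁿ. Then for every x ∈ E, r > 0, and integer k ≥ 0, the linear parts satisfy ‖A'_{x,r} − A'_{x,2^k r}‖ ≤ ((1+ε)^k − 1) · min(‖A'_{x,r}‖, ‖A'_{x,2^k r}‖). -/
open Metric

/-- A family `A = {A_{x,r}}` of affine maps `ℝⁿ → ℝᴺ` over `E ⊆ ℝⁿ` is `ε`-compatible if
`‖A'_{x,r} − A'_{y,s}‖ ≤ ε·min(‖A'_{x,r}‖, ‖A'_{y,s}‖)` whenever `x, y ∈ E`,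
`|x−y| ≤ max(r,s)`, and `1/2 ≤ r/s ≤ 2`, where `A'` is the linear part. -/
def IsCompatibleFamily (n N : ℕ) (E : Set (EuclideanSpace ℝ (Fin n)))
    (A : EuclideanSpace ℝ (Fin n) → ℝ →
      ContinuousAffineMap ℝ (EuclideanSpace ℝ (Fin n)) (EuclideanSpace ℝ (Fin N)))
    (ε : ℝ) : Prop :=
  ∀ x ∈ E, ∀ y ∈ E, ∀ r s : ℝ, 0 < r → 0 < s →
    dist x y ≤ max r s → 1 / 2 ≤ r / s → r / s ≤ 2 →
    ‖(A x r).contLinear - (A y s).contLinear‖ ≤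
      ε * min ‖(A x r).contLinear‖ ‖(A y s).contLinear‖

/-- If `A` is an `ε`-compatible family over `E`, then for every `x ∈ E`,
`r > 0`, and `k ≥ 0`, `‖A'_{x,r} − A'_{x,2^k r}‖ ≤ ((1+ε)^k − 1)·min(‖A'_{x,r}‖, ‖A'_{x,2^k r}‖)`. -/
theorem compatible_family_dyadic_estimate (n N : ℕ) (E : Set (EuclideanSpace ℝ (Fin n)))
    (A : EuclideanSpace ℝ (Fin n) → ℝ →
      ContinuousAffineMap ℝ (EuclideanSpace ℝ (Fin n)) (EuclideanSpace ℝ (Fin N)))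
    (ε : ℝ) (hε : 0 < ε) (hA : IsCompatibleFamily n N E A ε) :
    ∀ x ∈ E, ∀ r : ℝ, 0 < r → ∀ k : ℕ,
      ‖(A x r).contLinear - (A x (2 ^ k * r)).contLinear‖ ≤
        ((1 + ε) ^ k - 1) *
          min ‖(A x r).contLinear‖ ‖(A x (2 ^ k * r)).contLinear‖ := by
  intro x hx r hr k
  set L : ℕ → (EuclideanSpace ℝ (Fin n)) →L[ℝ] (EuclideanSpace ℝ (Fin N)) :=
    fun j => (A x (2 ^ j * r)).contLinear with hL
  have step : ∀ j : ℕ, ‖L j - L (j + 1)‖ ≤ ε * min ‖L j‖ ‖L (j + 1)‖ := by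
    intro j
    have h1 : (0:ℝ) < 2 ^ j * r := by positivity
    have h2 : (0:ℝ) < 2 ^ (j + 1) * r := by positivity
    have hratio : (2 ^ j * r) / (2 ^ (j + 1) * r) = 1 / 2 := by
      rw [pow_succ]; field_simp
    exact hA x hx x hx _ _ h1 h2 (by simp [dist_self]; positivity)
      (le_of_eq hratio.symm) (by rw [hratio]; norm_num)
  -- each step grows the norm by at most (1+ε)
  have grow : ∀ j : ℕ, ‖L (j + 1)‖ ≤ (1 + ε) * ‖L j‖ := by
    intro j
    have h1 : ‖L (j + 1)‖ ≤ ‖L j‖ + ‖L j - L (j + 1)‖ := by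
      have := norm_sub_norm_le (L (j + 1)) (L j)
      have h := norm_sub_rev (L j) (L (j + 1))
      linarith [norm_sub_norm_le (L (j + 1)) (L j), norm_sub_rev (L (j + 1)) (L j)]
    have h2 := step j
    have h3 : min ‖L j‖ ‖L (j + 1)‖ ≤ ‖L j‖ := min_le_left _ _
    nlinarith [hε.le]
  have growk : ∀ j : ℕ, ‖L j‖ ≤ (1 + ε) ^ j * ‖L 0‖ := by
    intro j
    induction j with
    | zero => simp
    | succ j ih =>
      calc ‖L (j + 1)‖ ≤ (1 + ε) * ‖L j‖ := grow j
        _ ≤ (1 + ε) * ((1 + ε) ^ j * ‖L 0‖) := by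
            apply mul_le_mul_of_nonneg_left ih; linarith
        _ = (1 + ε) ^ (j + 1) * ‖L 0‖ := by ring
  have hL0 : (A x r).contLinear = L 0 := by simp [hL]
  rw [hL0]
  show ‖L 0 - L k‖ ≤ ((1 + ε) ^ k - 1) * min ‖L 0‖ ‖L k‖
  induction k with
  | zero => simp
  | succ k ih =>
    have hpow : (1:ℝ) ≤ (1 + ε) ^ k := one_le_pow₀ (by linarith)
    have tri : ‖L 0 - L (k + 1)‖ ≤ ‖L 0 - L k‖ + ‖L k - L (k + 1)‖ := by
      calc ‖L 0 - L (k + 1)‖ = ‖(L 0 - L k) + (L k - L (k + 1))‖ := by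
            rw [sub_add_sub_cancel]
        _ ≤ ‖L 0 - L k‖ + ‖L k - L (k + 1)‖ := norm_add_le _ _
    have ih0 : ‖L 0 - L k‖ ≤ ((1 + ε) ^ k - 1) * ‖L 0‖ :=
      ih.trans (mul_le_mul_of_nonneg_left (min_le_left _ _) (by linarith))
    have ihk : ‖L 0 - L k‖ ≤ ((1 + ε) ^ k - 1) * ‖L k‖ :=
      ih.trans (mul_le_mul_of_nonneg_left (min_le_right _ _) (by linarith))
    have sk : ‖L k - L (k + 1)‖ ≤ ε * ‖L k‖ :=
      (step k).trans (mul_le_mul_of_nonneg_left (min_le_left _ _) hε.le)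
    have sk1 : ‖L k - L (k + 1)‖ ≤ ε * ‖L (k + 1)‖ :=
      (step k).trans (mul_le_mul_of_nonneg_left (min_le_right _ _) hε.le)
    have hback : ‖L k‖ ≤ (1 + ε) * ‖L (k + 1)‖ := by
      have h1 : ‖L k‖ ≤ ‖L (k + 1)‖ + ‖L k - L (k + 1)‖ := by
        linarith [norm_sub_norm_le (L k) (L (k + 1))]
      linarith
    rcases min_cases ‖L 0‖ ‖L (k + 1)‖ with ⟨hm, hle⟩ | ⟨hm, hle⟩ <;> rw [hm, pow_succ]
    · have hk0 := mul_le_mul_of_nonneg_left (growk k) hε.le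
      calc ‖L 0 - L (k + 1)‖ ≤ ((1 + ε) ^ k - 1) * ‖L 0‖ + ε * ‖L k‖ := by linarith
        _ ≤ ((1 + ε) ^ k - 1) * ‖L 0‖ + ε * ((1 + ε) ^ k * ‖L 0‖) := by linarith
        _ = ((1 + ε) ^ k * (1 + ε) - 1) * ‖L 0‖ := by ring
    · have hbk := mul_le_mul_of_nonneg_left hback (sub_nonneg.2 hpow)
      calc ‖L 0 - L (k + 1)‖ ≤ ((1 + ε) ^ k - 1) * ‖L k‖ + ε * ‖L (k + 1)‖ := by linarith
        _ ≤ ((1 + ε) ^ k - 1) * ((1 + ε) * ‖L (k + 1)‖) + ε * ‖L (k + 1)‖ := by linarith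
        _ = ((1 + ε) ^ k * (1 + ε) - 1) * ‖L (k + 1)‖ := by ring
end

section
/- There is an absolute constant ε̂ = √2 − 1 such that: if (f, E, A) is ε-almost affine for some ε < ε̂, then with θ = 1 − 2 log₂(1+ε) ∈ (0,1), for every x₀ ∈ E, r₀ > 0 and all x, y ∈ E ∩ B(x₀, r₀/2), |f(x) − f(y)| ≤ (4/(θ log 2)) · (|x−y|/r₀)^{(1−ε)θ} · ‖A'_{x₀,r₀}‖ · r₀. In particular f|_E is locally Hölder continuous with exponent (1−ε)θ → 1 as ε → 0. -/
open Metric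

/-- `(f, E, A)` is `ε`-almost affine: `A` is an `ε`-compatible family over `E` and
`|f z − A_{x,r} z| ≤ ε‖A'_{x,r}‖r` for all `z ∈ E ∩ B(x,r)`, `x ∈ E`, `r > 0`. -/
def IsAlmostAffine (n N : ℕ) (f : EuclideanSpace ℝ (Fin n) → EuclideanSpace ℝ (Fin N))
    (E : Set (EuclideanSpace ℝ (Fin n)))
    (A : EuclideanSpace ℝ (Fin n) → ℝ →
      ContinuousAffineMap ℝ (EuclideanSpace ℝ (Fin n)) (EuclideanSpace ℝ (Fin N)))
    (ε : ℝ) : Prop :=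
  IsCompatibleFamily n N E A ε ∧
  ∀ x ∈ E, ∀ r : ℝ, 0 < r → ∀ z ∈ E ∩ closedBall x r,
    dist (f z) ((A x r) z) ≤ ε * ‖(A x r).contLinear‖ * r

private lemma norm_growth {n N : ℕ} {E : Set (EuclideanSpace ℝ (Fin n))}
    {A : EuclideanSpace ℝ (Fin n) → ℝ →
      ContinuousAffineMap ℝ (EuclideanSpace ℝ (Fin n)) (EuclideanSpace ℝ (Fin N))}
    {ε : ℝ} (hε : 0 ≤ ε) (hcomp : IsCompatibleFamily n N E A ε)
    {x : EuclideanSpace ℝ (Fin n)} (hx : x ∈ E) {r₀ : ℝ} (hr₀ : 0 < r₀) :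
    ∀ k : ℕ, ‖(A x (r₀ / 2 ^ k)).contLinear‖ ≤ (1 + ε) ^ k * ‖(A x r₀).contLinear‖ := by
  intro k
  induction k with
  | zero => simp
  | succ k ih =>
    have hs : (0:ℝ) < r₀ / 2 ^ k := by positivity
    have hr : (0:ℝ) < r₀ / 2 ^ (k+1) := by positivity
    have hratio : (r₀ / 2 ^ (k+1)) / (r₀ / 2 ^ k) = 1 / 2 := by
      rw [div_div_div_comm, div_self hr₀.ne', pow_succ]
      field_simp
    have h := hcomp x hx x hx _ _ hr hs
      (by rw [dist_self]; exact le_max_of_le_left hr.le)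
      (by rw [hratio]) (by rw [hratio]; norm_num)
    have h2 : ‖(A x (r₀ / 2 ^ (k+1))).contLinear - (A x (r₀ / 2 ^ k)).contLinear‖ ≤
        ε * ‖(A x (r₀ / 2 ^ k)).contLinear‖ :=
      h.trans (mul_le_mul_of_nonneg_left (min_le_right _ _) hε)
    have tri : ‖(A x (r₀ / 2 ^ (k+1))).contLinear‖ ≤
        ‖(A x (r₀ / 2 ^ (k+1))).contLinear - (A x (r₀ / 2 ^ k)).contLinear‖ +
        ‖(A x (r₀ / 2 ^ k)).contLinear‖ := by
      simpa using norm_add_le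
        ((A x (r₀ / 2 ^ (k+1))).contLinear - (A x (r₀ / 2 ^ k)).contLinear)
        ((A x (r₀ / 2 ^ k)).contLinear)
    have hnn : (0:ℝ) ≤ (1+ε)^k := by positivity
    calc ‖(A x (r₀ / 2 ^ (k+1))).contLinear‖
        ≤ (1 + ε) * ‖(A x (r₀ / 2 ^ k)).contLinear‖ := by linarith
      _ ≤ (1 + ε) * ((1 + ε) ^ k * ‖(A x r₀).contLinear‖) :=
          mul_le_mul_of_nonneg_left ih (by linarith)
      _ = (1 + ε) ^ (k+1) * ‖(A x r₀).contLinear‖ := by ring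

set_option maxHeartbeats 1000000 in
/-- If `(f,E,A)` is `ε`-almost affine with `0 < ε < √2 − 1`, then with
`θ = 1 − 2 log₂(1+ε) ∈ (0,1)`, for all `x₀ ∈ E`, `r₀ > 0` and `x, y ∈ E ∩ B(x₀, r₀/2)`:
`|f x − f y| ≤ (4/(θ log 2))·(|x−y|/r₀)^{(1−ε)θ}·‖A'_{x₀,r₀}‖·r₀`; in particular `f|_E` is
locally Hölder continuous with exponent `(1−ε)θ`. -/
theorem almostAffine_holder (n N : ℕ) (f : EuclideanSpace ℝ (Fin n) → EuclideanSpace ℝ (Fin N))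
    (E : Set (EuclideanSpace ℝ (Fin n)))
    (A : EuclideanSpace ℝ (Fin n) → ℝ →
      ContinuousAffineMap ℝ (EuclideanSpace ℝ (Fin n)) (EuclideanSpace ℝ (Fin N)))
    (ε : ℝ) (hε0 : 0 < ε) (hε : ε < Real.sqrt 2 - 1)
    (hfa : IsAlmostAffine n N f E A ε) :
    (0 < 1 - 2 * Real.logb 2 (1 + ε) ∧ 1 - 2 * Real.logb 2 (1 + ε) < 1) ∧
    ∀ x₀ ∈ E, ∀ r₀ : ℝ, 0 < r₀ → ∀ x ∈ E ∩ closedBall x₀ (r₀ / 2),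
      ∀ y ∈ E ∩ closedBall x₀ (r₀ / 2),
        dist (f x) (f y) ≤
          (4 / ((1 - 2 * Real.logb 2 (1 + ε)) * Real.log 2)) *
            (dist x y / r₀) ^ ((1 - ε) * (1 - 2 * Real.logb 2 (1 + ε))) *
            ‖(A x₀ r₀).contLinear‖ * r₀ := by
  have hβpos : 0 < Real.logb 2 (1 + ε) := Real.logb_pos one_lt_two (by linarith)
  have hsqrt : 1 + ε < Real.sqrt 2 := by linarith
  have hβhalf : Real.logb 2 (1 + ε) < 1/2 := by
    have := Real.logb_lt_logb one_lt_two (by linarith) hsqrt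
    rwa [Real.sqrt_eq_rpow, Real.logb_rpow (by norm_num) (by norm_num)] at this
  have hεhalf : ε < 1/2 := by
    nlinarith [Real.sq_sqrt (by norm_num : (2:ℝ) ≥ 0), Real.sqrt_nonneg 2]
  set β := Real.logb 2 (1 + ε) with hβdef
  have h2β : (2:ℝ) ^ β = 1 + ε := by
    rw [hβdef]; exact Real.rpow_logb two_pos (by norm_num) (by linarith)
  refine ⟨⟨by linarith, by linarith⟩, ?_⟩
  intro x₀ hx₀ r₀ hr₀ x hx y hy
  obtain ⟨hxE, hxB⟩ := hx
  obtain ⟨hyE, hyB⟩ := hy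
  set θ := 1 - 2*β with hθdef
  have hθpos : 0 < θ := by rw [hθdef]; linarith
  have hθlt1 : θ < 1 := by rw [hθdef]; linarith
  set α := (1 - ε) * θ with hαdef
  have hαpos : 0 < α := mul_pos (by linarith) hθpos
  have hlog2 : 0 < Real.log 2 := Real.log_pos one_lt_two
  set a0 := ‖(A x₀ r₀).contLinear‖ with ha0
  have ha0nn : 0 ≤ a0 := norm_nonneg _
  set d := dist x y with hd
  have hdr : d ≤ r₀ := by
    have h1 : dist x x₀ ≤ r₀/2 := mem_closedBall.mp hxB
    have h2 : dist x₀ y ≤ r₀/2 := by rw [dist_comm]; exact mem_closedBall.mp hyB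
    calc d ≤ dist x x₀ + dist x₀ y := dist_triangle x x₀ y
      _ ≤ r₀ := by linarith
  rcases eq_or_lt_of_le (dist_nonneg : (0:ℝ) ≤ d) with h0 | hdpos
  · have hxy : x = y := dist_eq_zero.mp h0.symm
    rw [hxy, dist_self]
    positivity
  -- main case
  set t := r₀ / d with ht
  have ht0 : 0 < t := by positivity
  have ht1 : 1 ≤ t := (one_le_div hdpos).mpr hdr
  set k := ⌊Real.logb 2 t⌋₊ with hk
  have hlogt : 0 ≤ Real.logb 2 t := Real.logb_nonneg one_lt_two ht1
  have h2k : (2:ℝ)^k ≤ t := by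
    calc (2:ℝ)^k = (2:ℝ)^(k:ℝ) := (Real.rpow_natCast 2 k).symm
      _ ≤ (2:ℝ)^(Real.logb 2 t) :=
          Real.rpow_le_rpow_of_exponent_le one_le_two (Nat.floor_le hlogt)
      _ = t := Real.rpow_logb two_pos (by norm_num) ht0
  have ht2 : t < 2^(k+1) := by
    calc t = (2:ℝ)^(Real.logb 2 t) := (Real.rpow_logb two_pos (by norm_num) ht0).symm
      _ < (2:ℝ)^((k:ℝ)+1) :=
          Real.rpow_lt_rpow_of_exponent_lt one_lt_two (Nat.lt_floor_add_one _)
      _ = 2^(k+1) := by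
          rw [show ((k:ℝ)+1) = ((k+1 : ℕ):ℝ) by push_cast; ring, Real.rpow_natCast]
  set r := r₀ / 2^k with hr
  have h2kpos : (0:ℝ) < 2^k := by positivity
  have hrpos : 0 < r := by rw [hr]; positivity
  have hdle : d ≤ r := by
    rw [hr, le_div_iff₀ h2kpos]
    have h := mul_le_mul_of_nonneg_left h2k hdpos.le
    have hdt : d * t = r₀ := by rw [ht]; field_simp; exact div_self hdpos.ne'
    linarith
  have hr2d : r < 2*d := by
    rw [hr, div_lt_iff₀ h2kpos]
    have h := (div_lt_iff₀ hdpos).mp ht2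
    calc r₀ < 2^(k+1)*d := h
      _ = 2*d*2^k := by rw [pow_succ]; ring
  -- norm bounds
  have hA1 : ‖(A x r₀).contLinear‖ ≤ (1+ε) * a0 := by
    have h := hfa.1 x hxE x₀ hx₀ r₀ r₀ hr₀ hr₀
      (by rw [max_self]; exact (mem_closedBall.mp hxB).trans (by linarith))
      (by rw [div_self hr₀.ne']; norm_num) (by rw [div_self hr₀.ne']; norm_num)
    have h2 : ‖(A x r₀).contLinear - (A x₀ r₀).contLinear‖ ≤ ε * a0 :=
      h.trans (mul_le_mul_of_nonneg_left (min_le_right _ _) hε0.le)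
    have tri : ‖(A x r₀).contLinear‖ ≤
        ‖(A x r₀).contLinear - (A x₀ r₀).contLinear‖ + a0 := by
      simpa [ha0] using norm_add_le ((A x r₀).contLinear - (A x₀ r₀).contLinear)
        ((A x₀ r₀).contLinear)
    linarith
  have hAk : ‖(A x r).contLinear‖ ≤ (1+ε)^k * ((1+ε) * a0) :=
    (norm_growth hε0.le hfa.1 hxE hr₀ k).trans
      (mul_le_mul_of_nonneg_left hA1 (by positivity))
  set M := ‖(A x r).contLinear‖ with hM
  have hMnn : 0 ≤ M := norm_nonneg _
  have hfx : dist (f x) ((A x r) x) ≤ ε * M * r :=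
    hfa.2 x hxE r hrpos x ⟨hxE, mem_closedBall_self hrpos.le⟩
  have hfy : dist (f y) ((A x r) y) ≤ ε * M * r :=
    hfa.2 x hxE r hrpos y ⟨hyE, mem_closedBall.mpr (by rw [dist_comm]; exact hdle)⟩
  have hmid : dist ((A x r) x) ((A x r) y) ≤ M * d := by
    rw [dist_eq_norm]
    calc ‖(A x r) x - (A x r) y‖ = ‖(A x r).contLinear (x - y)‖ := by
          rw [← vsub_eq_sub x y, ContinuousAffineMap.contLinear_map_vsub, vsub_eq_sub]
      _ ≤ M * ‖x - y‖ := (A x r).contLinear.le_opNorm _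
      _ = M * d := by rw [← dist_eq_norm]
  have key2 : dist (f x) (f y) ≤ (1+ε)^k * ((1+ε)*a0) * ((1+4*ε)*d) := by
    have key : dist (f x) (f y) ≤ M * (2*ε*r + d) := by
      calc dist (f x) (f y)
          ≤ dist (f x) ((A x r) x) + dist ((A x r) x) ((A x r) y) +
            dist ((A x r) y) (f y) := dist_triangle4 _ _ _ _
        _ ≤ ε*M*r + M*d + ε*M*r :=
            add_le_add (add_le_add hfx hmid) (by rw [dist_comm]; exact hfy)
        _ = M*(2*ε*r+d) := by ring
    have h1 : M * (2*ε*r + d) ≤ M * ((1+4*ε)*d) := by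
      apply mul_le_mul_of_nonneg_left _ hMnn
      nlinarith
    have h2 : M * ((1+4*ε)*d) ≤ (1+ε)^k*((1+ε)*a0) * ((1+4*ε)*d) :=
      mul_le_mul_of_nonneg_right hAk (by positivity)
    linarith
  have hpow : (1+ε)^k ≤ t ^ β := by
    have h1 : ((2:ℝ)^k : ℝ) ^ β ≤ t ^ β :=
      Real.rpow_le_rpow (by positivity) h2k hβpos.le
    have h2 : ((2:ℝ)^k : ℝ) ^ β = (1+ε)^k := by
      rw [← Real.rpow_natCast 2 k, ← Real.rpow_mul (by norm_num), mul_comm,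
        Real.rpow_mul (by norm_num), h2β, Real.rpow_natCast]
    linarith
  have hdr0 : 0 < d / r₀ := by positivity
  have e1 : (d/r₀)^(1-β) = (d/r₀) * t^β := by
    rw [Real.rpow_sub hdr0, Real.rpow_one, div_eq_mul_inv ((d/r₀):ℝ),
      ← Real.inv_rpow hdr0.le, inv_div, ← ht]
  have e2 : (d/r₀)^((1:ℝ)-β)*r₀ = t^β * d := by
    rw [e1]; field_simp
  have hle1 : d/r₀ ≤ 1 := (div_le_one hr₀).mpr hdr
  have hexp : α ≤ 1 - β := by
    have h : 0 ≤ ε * (1 - 2*β) := by rw [← hθdef]; exact mul_nonneg hε0.le hθpos.le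
    have e : (1-ε)*(1-2*β) = 1 - 2*β - ε*(1-2*β) := by ring
    rw [hαdef, hθdef]
    linarith [h, hβpos, e]
  have hmono : (d/r₀)^((1:ℝ)-β) ≤ (d/r₀)^α :=
    Real.rpow_le_rpow_of_exponent_ge hdr0 hle1 hexp
  have hconst : (1+ε)*(1+4*ε) ≤ 4/(θ*Real.log 2) := by
    rw [le_div_iff₀ (by positivity)]
    have hl2 : Real.log 2 < 0.6931471808 := Real.log_two_lt_d9
    have hsq : ε*ε ≤ (1/2)*(1/2) := mul_le_mul hεhalf.le hεhalf.le hε0.le (by norm_num)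
    have hb1 : (1+ε)*(1+4*ε) ≤ 4.5 := by
      have e : (1+ε)*(1+4*ε) = 1+5*ε+4*(ε*ε) := by ring
      rw [e]; linarith
    have hb2 : θ*Real.log 2 ≤ 0.6931471808 := by
      have h := mul_le_mul_of_nonneg_right hθlt1.le hlog2.le
      rw [one_mul] at h
      exact h.trans hl2.le
    have hmm := mul_le_mul hb1 hb2 (by positivity) (by norm_num)
    exact hmm.trans (by norm_num)
  have hrpownn : (0:ℝ) ≤ (d/r₀)^α := Real.rpow_nonneg hdr0.le _
  calc dist (f x) (f y)
      ≤ (1+ε)^k * ((1+ε)*a0) * ((1+4*ε)*d) := key2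
    _ ≤ t^β * ((1+ε)*a0) * ((1+4*ε)*d) := by
        apply mul_le_mul_of_nonneg_right (mul_le_mul_of_nonneg_right hpow (by positivity))
        positivity
    _ = (1+ε)*(1+4*ε) * ((d/r₀)^((1:ℝ)-β)) * a0 * r₀ := by
        linear_combination (-((1+ε)*(1+4*ε)*a0)) * e2
    _ ≤ (1+ε)*(1+4*ε) * ((d/r₀)^α) * a0 * r₀ := by
        apply mul_le_mul_of_nonneg_right
          (mul_le_mul_of_nonneg_right (mul_le_mul_of_nonneg_left hmono (by positivity)) ha0nn)
          hr₀.le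
    _ ≤ 4/(θ*Real.log 2) * ((d/r₀)^α) * a0 * r₀ := by
        apply mul_le_mul_of_nonneg_right
          (mul_le_mul_of_nonneg_right (mul_le_mul_of_nonneg_right hconst hrpownn) ha0nn)
          hr₀.le
end

section
/- Suppose (f, B(x,r), A) is ε-almost affine, λₙ(A'_{x,r}) ≤ H·λ₁(A'_{x,r}), and H(t + 2ε) ≤ 1 for some 0 < t < 1. Then ‖A'_{x,r}‖ r ≤ diam f(B(x,r)) ≤ 3 ‖A'_{x,r}‖ r, and t ‖A'_{x,r}‖ r ≤ |f(x) − f(y)| ≤ 2 ‖A'_{x,r}‖ r for all y with |y − x| = r. -/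
open Metric

/-- The smallest singular value `λ₁(L)` of a linear map, characterized variationally as
the infimum of `‖L v‖` over unit vectors `v`. (The largest singular value `λₙ(L)` is `‖L‖`.) -/
noncomputable def sigmaMin {n N : ℕ}
    (L : EuclideanSpace ℝ (Fin n) →L[ℝ] EuclideanSpace ℝ (Fin N)) : ℝ :=
  sInf {c : ℝ | ∃ v : EuclideanSpace ℝ (Fin n), ‖v‖ = 1 ∧ c = ‖L v‖}

set_option maxHeartbeats 1000000 in
/-- Suppose `(f, B(x,r), A)` is `ε`-almost affine,
`λₙ(A'_{x,r}) ≤ H·λ₁(A'_{x,r})`, and `H(t + 2ε) ≤ 1` for some `0 < t < 1`. Then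
`‖A'_{x,r}‖r ≤ diam f(B(x,r)) ≤ 3‖A'_{x,r}‖r`, and
`t‖A'_{x,r}‖r ≤ |f x − f y| ≤ 2‖A'_{x,r}‖r` for all `y` with `|y−x| = r`. -/
theorem almostAffine_diam_and_inradius (n N : ℕ)
    (f : EuclideanSpace ℝ (Fin n) → EuclideanSpace ℝ (Fin N))
    (x : EuclideanSpace ℝ (Fin n)) (r : ℝ) (hr : 0 < r)
    (A : EuclideanSpace ℝ (Fin n) → ℝ →
      ContinuousAffineMap ℝ (EuclideanSpace ℝ (Fin n)) (EuclideanSpace ℝ (Fin N)))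
    (ε t H : ℝ) (hε : 0 < ε) (ht0 : 0 < t) (ht1 : t < 1) (hH : 1 ≤ H)
    (hfa : IsAlmostAffine n N f (closedBall x r) A ε)
    (hsv : ‖(A x r).contLinear‖ ≤ H * sigmaMin (A x r).contLinear)
    (hHt : H * (t + 2 * ε) ≤ 1) :
    (‖(A x r).contLinear‖ * r ≤ Metric.diam (f '' closedBall x r) ∧
      Metric.diam (f '' closedBall x r) ≤ 3 * ‖(A x r).contLinear‖ * r) ∧
    ∀ y : EuclideanSpace ℝ (Fin n), dist y x = r →
      t * ‖(A x r).contLinear‖ * r ≤ dist (f x) (f y) ∧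
      dist (f x) (f y) ≤ 2 * ‖(A x r).contLinear‖ * r := by

  obtain ⟨-, happ⟩ := hfa
  set L := (A x r).contLinear with hLdef
  have hlam : (0:ℝ) ≤ ‖L‖ := norm_nonneg _
  have hx : x ∈ closedBall x r := mem_closedBall_self hr.le
  have key : ∀ z ∈ closedBall x r, dist (f z) ((A x r) z) ≤ ε * ‖L‖ * r :=
    fun z hz => happ x hx r hr z ⟨hz, hz⟩
  have hdiff : ∀ z w : EuclideanSpace ℝ (Fin n),
      dist ((A x r) z) ((A x r) w) = ‖L (z - w)‖ := by
    intro z w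
    have h := (A x r).toAffineMap.linearMap_vsub z w
    simp only [vsub_eq_sub] at h
    rw [dist_eq_norm, hLdef]
    simp only [ContinuousAffineMap.coe_contLinear, h]
    rfl
  have hHpos : (0:ℝ) < H := by linarith
  have h1H : t + 2 * ε ≤ 1 / H := by
    rw [le_div_iff₀ hHpos]; nlinarith
  have h2e : 2 * ε ≤ 1 - t := by
    nlinarith [mul_le_mul_of_nonneg_right hH (by linarith : (0:ℝ) ≤ t + 2 * ε)]
  have hσ : ‖L‖ * (1 / H) ≤ sigmaMin L := by
    rw [mul_one_div, div_le_iff₀ hHpos]; linarith [hsv]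
  have hσle : ∀ v : EuclideanSpace ℝ (Fin n), ‖v‖ = 1 → sigmaMin L ≤ ‖L v‖ := by
    intro v hv
    exact csInf_le ⟨0, by rintro c ⟨u, -, rfl⟩; exact norm_nonneg _⟩ ⟨v, hv, rfl⟩
  -- generic upper bound for pairs in the ball
  have hub : ∀ z ∈ closedBall x r, ∀ w ∈ closedBall x r,
      dist (f z) (f w) ≤ ‖L‖ * dist z w + 2 * (ε * ‖L‖ * r) := by
    intro z hz w hw
    calc dist (f z) (f w)
        ≤ dist (f z) ((A x r) z) + dist ((A x r) z) ((A x r) w)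
            + dist ((A x r) w) (f w) := dist_triangle4 _ _ _ _
      _ ≤ ε * ‖L‖ * r + ‖L‖ * dist z w + ε * ‖L‖ * r := by
          have h1 := key z hz
          have h2 := key w hw
          have h3 : dist ((A x r) z) ((A x r) w) ≤ ‖L‖ * dist z w := by
            rw [hdiff, dist_eq_norm]; exact L.le_opNorm _
          rw [dist_comm ((A x r) w) (f w)]
          linarith
      _ = ‖L‖ * dist z w + 2 * (ε * ‖L‖ * r) := by ring
  have hCub : ∀ z ∈ closedBall x r, ∀ w ∈ closedBall x r,
      dist (f z) (f w) ≤ 3 * ‖L‖ * r := by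
    intro z hz w hw
    have hzw : dist z w ≤ 2 * r := by
      have := mem_closedBall.mp hz
      have := mem_closedBall.mp hw
      have := dist_triangle z x w
      rw [dist_comm x w] at this
      linarith
    have := hub z hz w hw
    nlinarith [mul_nonneg hlam hr.le]
  have hbdd : Bornology.IsBounded (f '' closedBall x r) := by
    rw [Metric.isBounded_iff]
    refine ⟨3 * ‖L‖ * r, ?_⟩
    rintro _ ⟨z, hz, rfl⟩ _ ⟨w, hw, rfl⟩
    exact hCub z hz w hw
  constructor
  · constructor
    · -- lower bound on diam
      rcases eq_or_lt_of_le hlam with hL0 | hL0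
      · rw [← hL0]; simpa using Metric.diam_nonneg
      · have hc : ‖L‖ * (1 + 2 * ε) / 2 < ‖L‖ := by nlinarith
        obtain ⟨v, hv1, hvc⟩ := L.exists_lt_apply_of_lt_opNorm hc
        set z := x + r • v with hzdef
        set w := x - r • v with hwdef
        have hnv : ‖r • v‖ ≤ r := by
          rw [norm_smul, Real.norm_eq_abs, abs_of_pos hr]
          nlinarith
        have hz : z ∈ closedBall x r := by
          rw [mem_closedBall, dist_eq_norm, hzdef]
          simpa using hnv
        have hw : w ∈ closedBall x r := by
          rw [mem_closedBall, dist_eq_norm, hwdef]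
          simpa [norm_sub_rev] using hnv
        have hzw : z - w = (2 * r) • v := by
          rw [hzdef, hwdef]
          rw [two_mul, add_smul]
          abel
        have hAzw : dist ((A x r) z) ((A x r) w) = 2 * r * ‖L v‖ := by
          rw [hdiff, hzw, map_smul, norm_smul, Real.norm_eq_abs,
            abs_of_pos (by linarith : (0:ℝ) < 2 * r)]
        have htri : dist ((A x r) z) ((A x r) w)
            ≤ dist ((A x r) z) (f z) + dist (f z) (f w) + dist (f w) ((A x r) w) :=
          dist_triangle4 _ _ _ _
        have h1 := key z hz
        have h2 := key w hw
        rw [dist_comm ((A x r) z) (f z)] at htri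
        have hlow : ‖L‖ * r ≤ dist (f z) (f w) := by
          rw [hAzw] at htri
          have h3 : r * (‖L‖ * (1 + 2 * ε) / 2) < r * ‖L v‖ :=
            mul_lt_mul_of_pos_left hvc hr
          nlinarith [h3]
        exact hlow.trans (Metric.dist_le_diam_of_mem hbdd ⟨z, hz, rfl⟩ ⟨w, hw, rfl⟩)
    · -- upper bound on diam
      refine Metric.diam_le_of_forall_dist_le (by positivity) ?_
      rintro _ ⟨z, hz, rfl⟩ _ ⟨w, hw, rfl⟩
      exact hCub z hz w hw
  · intro y hy
    have hyb : y ∈ closedBall x r := mem_closedBall.mpr hy.le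
    have hxy : ‖x - y‖ = r := by rw [← dist_eq_norm, dist_comm]; exact hy
    have hAxy : dist ((A x r) x) ((A x r) y) = ‖L (x - y)‖ := hdiff x y
    constructor
    · -- lower bound
      have hvnorm : ‖(r⁻¹ : ℝ) • (x - y)‖ = 1 := by
        rw [norm_smul, Real.norm_eq_abs, abs_of_pos (inv_pos.mpr hr), hxy]
        field_simp
      have h5 := hσle _ hvnorm
      have h6 : ‖L ((r⁻¹ : ℝ) • (x - y))‖ = r⁻¹ * ‖L (x - y)‖ := by
        rw [map_smul, norm_smul, Real.norm_eq_abs, abs_of_pos (inv_pos.mpr hr)]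
      rw [h6] at h5
      have hσr : r * sigmaMin L ≤ ‖L (x - y)‖ := by
        have h7 := mul_le_mul_of_nonneg_left h5 hr.le
        rw [← mul_assoc, mul_inv_cancel₀ hr.ne', one_mul] at h7
        exact h7
      have htri : dist ((A x r) x) ((A x r) y)
          ≤ dist ((A x r) x) (f x) + dist (f x) (f y) + dist (f y) ((A x r) y) :=
        dist_triangle4 _ _ _ _
      have h1 := key x hx
      have h2 := key y hyb
      rw [dist_comm ((A x r) x) (f x)] at htri
      have ht' : t ≤ 1 / H - 2 * ε := by linarith
      rw [hAxy] at htri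
      nlinarith [mul_le_mul_of_nonneg_right ht' (mul_nonneg hlam hr.le),
        mul_le_mul_of_nonneg_right hσ hr.le, hσr, htri, h1, h2]
    · -- upper bound
      have := hub x hx y hyb
      rw [dist_comm x y] at this
      rw [hy] at this
      nlinarith [mul_nonneg hlam hr.le]
end

section
/- Suppose V is an n-dimensional affine plane in ℝᴺ (1 ≤ n ≤ N−1), v ∈ V, and e is a unit vector of ℝᴺ. For any topological embedding f : B(v,2r) → ℝᴺ, the beta number of the image satisfies β_{f(V)}( f(v), |f(v+re) − f(v)|/2 ) ≤ 72 N · (H_f(B(v,2r)) − 1). -/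
open Metric Finset

private lemma inner_four {E : Type*} [NormedAddCommGroup E] [InnerProductSpace ℝ E]
    (a b c d : E) :
    (inner ℝ (a - b) (c - d) : ℝ) =
      (‖a - d‖ ^ 2 - ‖a - c‖ ^ 2 + ‖b - c‖ ^ 2 - ‖b - d‖ ^ 2) / 2 := by
  simp only [inner_sub_left, inner_sub_right, norm_sub_sq_real]
  ring

set_option maxHeartbeats 1000000 in
private lemma abs_sq_sub_le {H a b M : ℝ} (hH : 1 ≤ H) (ha : 0 ≤ a) (hb : 0 ≤ b)
    (hM : 0 ≤ M) (hab : a ≤ H * b) (hba : b ≤ H * a) (hbM : b ≤ M) :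
    |a ^ 2 - b ^ 2| ≤ (H ^ 2 - 1) * H ^ 2 * M ^ 2 := by
  have hH2 : (0:ℝ) ≤ H ^ 2 - 1 := by nlinarith
  have hb2 : b ^ 2 ≤ M ^ 2 := by nlinarith
  have ha2 : a ^ 2 ≤ H ^ 2 * M ^ 2 := by nlinarith
  rw [abs_le]
  constructor
  · nlinarith [mul_le_mul_of_nonneg_left hb2 hH2]
  · nlinarith [mul_le_mul_of_nonneg_left ha2 hH2, mul_nonneg (mul_nonneg hH2 hH2) (sq_nonneg M)]

set_option maxHeartbeats 1000000 in
private lemma m_lb {H t d mn : ℝ} (hH1 : 1 ≤ H) (hH145 : H ≤ 145 / 144) (ht : 0 < t)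
    (h1 : 2 * t ≤ H * d) (h3 : d ≤ H * mn) (hd : 0 ≤ d) :
    (19 / 10) * t ≤ mn := by
  nlinarith [mul_le_mul_of_nonneg_left h3 (by linarith : (0:ℝ) ≤ H)]

set_option maxHeartbeats 1000000 in
private lemma cross_final {H t d1 X mi mj : ℝ} (hH1 : 1 ≤ H) (hH145 : H ≤ 145 / 144)
    (ht : 0 < t) (hd1 : 0 ≤ d1) (hd1ub : d1 ≤ 4 * H * t)
    (hmi : (19 / 10) * t ≤ mi) (hmj : (19 / 10) * t ≤ mj)
    (hX : |X| ≤ ((H ^ 2 - 1) * H ^ 2 * d1 ^ 2 + (H ^ 2 - 1) * H ^ 2 * (H * d1) ^ 2) / 2) :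
    |X| ≤ 12 * (H - 1) * (mi * mj) := by
  have hδ0 : (0:ℝ) ≤ H - 1 := by linarith
  have hH2 : H ^ 2 ≤ 51 / 50 := by nlinarith
  have hH4 : H ^ 4 ≤ 21 / 20 := by nlinarith
  have hH6 : H ^ 6 ≤ 27 / 25 := by
    nlinarith [mul_le_mul hH4 hH2 (by positivity) (by norm_num : (0:ℝ) ≤ 21/20),
      pow_nonneg (by linarith : (0:ℝ) ≤ H) 6]
  have hXf : H ^ 2 - 1 ≤ (289 / 144) * (H - 1) := by nlinarith
  have hd1sq : d1 ^ 2 ≤ 16 * H ^ 2 * t ^ 2 := by nlinarith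
  have hco : (0:ℝ) ≤ (H ^ 2 - 1) * (H ^ 2 + H ^ 4) / 2 := by
    nlinarith [pow_nonneg (by linarith : (0:ℝ) ≤ H) 2, pow_nonneg (by linarith : (0:ℝ) ≤ H) 4]
  have step1 : ((H ^ 2 - 1) * H ^ 2 * d1 ^ 2 + (H ^ 2 - 1) * H ^ 2 * (H * d1) ^ 2) / 2
      = ((H ^ 2 - 1) * (H ^ 2 + H ^ 4) / 2) * d1 ^ 2 := by ring
  have step2 : ((H ^ 2 - 1) * (H ^ 2 + H ^ 4) / 2) * d1 ^ 2
      ≤ ((H ^ 2 - 1) * (H ^ 2 + H ^ 4) / 2) * (16 * H ^ 2 * t ^ 2) :=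
    mul_le_mul_of_nonneg_left hd1sq hco
  have step3 : ((H ^ 2 - 1) * (H ^ 2 + H ^ 4) / 2) * (16 * H ^ 2 * t ^ 2)
      ≤ 12 * (H - 1) * (((19 / 10) * t) * ((19 / 10) * t)) := by
    have e1 : ((H ^ 2 - 1) * (H ^ 2 + H ^ 4) / 2) * (16 * H ^ 2 * t ^ 2)
        = 8 * (H ^ 2 - 1) * (H ^ 4 + H ^ 6) * t ^ 2 := by ring
    rw [e1]
    have h46 : H ^ 4 + H ^ 6 ≤ 213 / 100 := by linarith
    have hX2 : 8 * (H ^ 2 - 1) * (H ^ 4 + H ^ 6) ≤ 8 * ((289 / 144) * (H - 1)) * (213 / 100) := by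
      have hb2 : (0:ℝ) ≤ H ^ 4 + H ^ 6 := by positivity
      have hb3 : (0:ℝ) ≤ (289 / 144) * (H - 1) := by linarith
      linarith [mul_le_mul hXf h46 hb2 hb3]
    linarith [mul_le_mul_of_nonneg_right hX2 (sq_nonneg t), mul_nonneg hδ0 (sq_nonneg t)]
  have step4 : 12 * (H - 1) * (((19 / 10) * t) * ((19 / 10) * t)) ≤ 12 * (H - 1) * (mi * mj) := by
    have h1 : ((19 / 10) * t) * ((19 / 10) * t) ≤ mi * mj := by
      apply mul_le_mul hmi hmj (by linarith) (by linarith)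
    apply mul_le_mul_of_nonneg_left h1 (by linarith)
  calc |X| ≤ ((H ^ 2 - 1) * H ^ 2 * d1 ^ 2 + (H ^ 2 - 1) * H ^ 2 * (H * d1) ^ 2) / 2 := hX
    _ = ((H ^ 2 - 1) * (H ^ 2 + H ^ 4) / 2) * d1 ^ 2 := step1
    _ ≤ ((H ^ 2 - 1) * (H ^ 2 + H ^ 4) / 2) * (16 * H ^ 2 * t ^ 2) := step2
    _ ≤ 12 * (H - 1) * (((19 / 10) * t) * ((19 / 10) * t)) := step3
    _ ≤ 12 * (H - 1) * (mi * mj) := step4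

set_option maxHeartbeats 1000000 in
private lemma eta_final {H t X mj : ℝ} (hH1 : 1 ≤ H) (hH145 : H ≤ 145 / 144) (ht : 0 < t)
    (hmj : (19 / 10) * t ≤ mj)
    (hX : |X| ≤ ((H ^ 2 - 1) * H ^ 2 * (t + H * (2 * t)) ^ 2
      + (H ^ 2 - 1) * H ^ 2 * (H * (2 * t)) ^ 2) / 2) :
    |X| ≤ (8 * (H - 1) * t) * mj := by
  have hδ0 : (0:ℝ) ≤ H - 1 := by linarith
  have hH2 : H ^ 2 ≤ 51 / 50 := by nlinarith
  have hXf : H ^ 2 - 1 ≤ (289 / 144) * (H - 1) := by nlinarith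
  have step1 : ((H ^ 2 - 1) * H ^ 2 * (t + H * (2 * t)) ^ 2
      + (H ^ 2 - 1) * H ^ 2 * (H * (2 * t)) ^ 2) / 2
      = ((H ^ 2 - 1) * H ^ 2 * ((1 + 2 * H) ^ 2 + 4 * H ^ 2) / 2) * t ^ 2 := by ring
  have hpar : (1 + 2 * H) ^ 2 + 4 * H ^ 2 ≤ 1330 / 100 := by nlinarith
  have hcoef : (H ^ 2 - 1) * H ^ 2 * ((1 + 2 * H) ^ 2 + 4 * H ^ 2) / 2
      ≤ (152 / 10) * (H - 1) := by
    have hb1 : (0:ℝ) ≤ H ^ 2 - 1 := by nlinarith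
    have h1 : (H ^ 2 - 1) * H ^ 2 ≤ ((289 / 144) * (H - 1)) * (51 / 50) := by
      have hb3 : (0:ℝ) ≤ (289 / 144) * (H - 1) := by linarith
      nlinarith [mul_le_mul hXf hH2 (by positivity : (0:ℝ) ≤ H ^ 2) hb3]
    have h2 : (0:ℝ) ≤ (1 + 2 * H) ^ 2 + 4 * H ^ 2 := by positivity
    have h3 : (0:ℝ) ≤ ((289 / 144) * (H - 1)) * (51 / 50) := by linarith
    linarith [mul_le_mul h1 hpar h2 h3, hδ0]
  have step2 : ((H ^ 2 - 1) * H ^ 2 * ((1 + 2 * H) ^ 2 + 4 * H ^ 2) / 2) * t ^ 2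
      ≤ ((152 / 10) * (H - 1)) * t ^ 2 :=
    mul_le_mul_of_nonneg_right hcoef (sq_nonneg t)
  have step3 : ((152 / 10) * (H - 1)) * t ^ 2 ≤ (8 * (H - 1) * t) * mj := by
    have h1 : (8 * (H - 1) * t) * ((19 / 10) * t) = (152 / 10) * (H - 1) * t ^ 2 := by ring
    have h2 : (8 * (H - 1) * t) * ((19 / 10) * t) ≤ (8 * (H - 1) * t) * mj :=
      mul_le_mul_of_nonneg_left hmj (by positivity)
    linarith
  calc |X| ≤ _ := hX
    _ = ((H ^ 2 - 1) * H ^ 2 * ((1 + 2 * H) ^ 2 + 4 * H ^ 2) / 2) * t ^ 2 := step1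
    _ ≤ ((152 / 10) * (H - 1)) * t ^ 2 := step2
    _ ≤ (8 * (H - 1) * t) * mj := step3

private lemma eps_34 {kr Nr δ : ℝ} (h1 : kr ≤ Nr) (h2 : Nr * δ ≤ 1 / 72) (h3 : 0 ≤ δ) :
    (kr - 1) * (12 * δ) ≤ 3 / 4 := by
  nlinarith [mul_le_mul_of_nonneg_right h1 h3]

private lemma sum_le_zero_of {c S : ℝ} (h1 : c ≤ 3 / 4) (h2 : (1 - c) * S ≤ 0) (h3 : 0 ≤ S) :
    S ≤ 0 := by nlinarith

private lemma final_comb {a b δ t : ℝ} (h : a ≤ b) (hδ : 0 ≤ δ) (ht : 0 ≤ t) (ha : 0 ≤ a) :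
    2 * a * (8 * δ * t) ≤ t * (72 * b * δ) := by
  nlinarith [mul_le_mul_of_nonneg_right h (mul_nonneg hδ ht),
    mul_nonneg ha (mul_nonneg hδ ht)]

private lemma le_sq_of {a b : ℝ} (h1 : a ≤ b) (h2 : 2 ≤ b) : a ≤ b ^ 2 := by nlinarith

private lemma gram_lb {E : Type*} [NormedAddCommGroup E] [InnerProductSpace ℝ E]
    {k : ℕ} (u : Fin k → E) (hu : ∀ j, ‖u j‖ = 1) {ε : ℝ}
    (hor : ∀ i j, i ≠ j → |(inner ℝ (u i) (u j) : ℝ)| ≤ ε) (c : Fin k → ℝ) :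
    (1 - ((k : ℝ) - 1) * ε) * (∑ j, c j ^ 2) ≤ ‖∑ j, c j • u j‖ ^ 2 := by
  rcases Nat.eq_zero_or_pos k with hk | hk
  · subst hk; simp
  have expand : ‖∑ j, c j • u j‖ ^ 2
      = ∑ i, ∑ j, (c i * c j) * (inner ℝ (u i) (u j) : ℝ) := by
    rw [← real_inner_self_eq_norm_sq, sum_inner]
    refine Finset.sum_congr rfl fun i _ => ?_
    rw [inner_sum]
    refine Finset.sum_congr rfl fun j _ => ?_
    rw [real_inner_smul_left, real_inner_smul_right]; ring
  rw [expand]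
  have hdiag : ∀ i : Fin k, (inner ℝ (u i) (u i) : ℝ) = 1 := by
    intro i; rw [real_inner_self_eq_norm_sq, hu i, one_pow]
  set T := ∑ j, c j ^ 2 with hT
  have split : ∀ i : Fin k, ∑ j, (c i * c j) * (inner ℝ (u i) (u j) : ℝ)
      = c i ^ 2 + ∑ j ∈ univ.erase i, (c i * c j) * (inner ℝ (u i) (u j) : ℝ) := by
    intro i
    rw [← Finset.sum_erase_add _ _ (mem_univ i), hdiag i]
    ring
  have key : ∀ i : Fin k, c i ^ 2 - ε * (((k:ℝ) - 1) * c i ^ 2 / 2 + (T - c i ^ 2) / 2)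
      ≤ ∑ j, (c i * c j) * (inner ℝ (u i) (u j) : ℝ) := by
    intro i
    rw [split i]
    have habs : ∀ j ∈ univ.erase i,
        |(c i * c j) * (inner ℝ (u i) (u j) : ℝ)| ≤ ε * ((c i ^ 2 + c j ^ 2) / 2) := by
      intro j hj
      have hij : i ≠ j := (Finset.mem_erase.1 hj).1.symm
      have h2 := hor i j hij
      have hε : 0 ≤ ε := le_trans (abs_nonneg _) h2
      have h5 : |c i * c j| ≤ (c i ^ 2 + c j ^ 2) / 2 := by
        rw [abs_mul]
        nlinarith [sq_nonneg (|c i| - |c j|), sq_abs (c i), sq_abs (c j)]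
      rw [abs_mul, mul_comm ε]
      exact mul_le_mul h5 h2 (abs_nonneg _) (by positivity)
    have hsumabs : |∑ j ∈ univ.erase i, (c i * c j) * (inner ℝ (u i) (u j) : ℝ)|
        ≤ ∑ j ∈ univ.erase i, ε * ((c i ^ 2 + c j ^ 2) / 2) :=
      le_trans (Finset.abs_sum_le_sum_abs _ _) (Finset.sum_le_sum habs)
    have h7 : ∑ j ∈ univ.erase i, ε * ((c i ^ 2 + c j ^ 2) / 2)
        = ε * (((k:ℝ) - 1) * c i ^ 2 / 2 + (T - c i ^ 2) / 2) := by
      have hcard : ((univ.erase i).card : ℝ) = (k : ℝ) - 1 := by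
        rw [Finset.card_erase_of_mem (mem_univ i), Finset.card_univ, Fintype.card_fin,
          Nat.cast_sub hk, Nat.cast_one]
      have hsum : ∑ j ∈ univ.erase i, c j ^ 2 = T - c i ^ 2 :=
        Finset.sum_erase_eq_sub (mem_univ i)
      calc ∑ j ∈ univ.erase i, ε * ((c i ^ 2 + c j ^ 2) / 2)
          = ∑ j ∈ univ.erase i, (ε * (c i ^ 2 / 2) + (ε / 2) * c j ^ 2) :=
            Finset.sum_congr rfl fun j _ => by ring
        _ = (univ.erase i).card • (ε * (c i ^ 2 / 2)) + (ε / 2) * ∑ j ∈ univ.erase i, c j ^ 2 := by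
            rw [Finset.sum_add_distrib, Finset.sum_const, Finset.mul_sum]
        _ = _ := by rw [nsmul_eq_mul, hcard, hsum]; ring
    have := neg_abs_le (∑ j ∈ univ.erase i, (c i * c j) * (inner ℝ (u i) (u j) : ℝ))
    rw [h7] at hsumabs
    linarith
  have total := Finset.sum_le_sum fun i (_ : i ∈ univ) => key i
  have lhs_eq : ∑ i, (c i ^ 2 - ε * (((k:ℝ) - 1) * c i ^ 2 / 2 + (T - c i ^ 2) / 2))
      = (1 - ((k : ℝ) - 1) * ε) * T := by
    have hA : ∑ i, (((k:ℝ) - 1) * c i ^ 2 / 2 + (T - c i ^ 2) / 2)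
        = ((k:ℝ) - 1) * T := by
      calc ∑ i, (((k:ℝ) - 1) * c i ^ 2 / 2 + (T - c i ^ 2) / 2)
          = ∑ i, ((((k:ℝ) - 1) / 2) * c i ^ 2 + (T / 2 - (1 / 2) * c i ^ 2)) :=
            Finset.sum_congr rfl fun i _ => by ring
        _ = (((k:ℝ) - 1) / 2) * (∑ i, c i ^ 2)
            + ((univ : Finset (Fin k)).card • (T / 2) - (1 / 2) * ∑ i, c i ^ 2) := by
            rw [Finset.sum_add_distrib, Finset.sum_sub_distrib, Finset.sum_const,
              Finset.mul_sum, Finset.mul_sum]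
        _ = _ := by
            rw [nsmul_eq_mul, Finset.card_univ, Fintype.card_fin, ← hT]
            ring
    calc ∑ i, (c i ^ 2 - ε * (((k:ℝ) - 1) * c i ^ 2 / 2 + (T - c i ^ 2) / 2))
        = (∑ i, c i ^ 2) - ε * ∑ i, (((k:ℝ) - 1) * c i ^ 2 / 2 + (T - c i ^ 2) / 2) := by
          rw [Finset.sum_sub_distrib, Finset.mul_sum]
      _ = _ := by rw [hA, ← hT]; ring
  rw [lhs_eq] at total
  exact total

private lemma proj_bd {E : Type*} [NormedAddCommGroup E] [InnerProductSpace ℝ E]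
    [FiniteDimensional ℝ E]
    {k : ℕ} (u : Fin k → E) (hu : ∀ j, ‖u j‖ = 1) {ε : ℝ}
    (hε : ((k : ℝ) - 1) * ε ≤ 3 / 4)
    (hor : ∀ i j, i ≠ j → |(inner ℝ (u i) (u j) : ℝ)| ≤ ε)
    (w : E) {η : ℝ} (hη : 0 ≤ η)
    (hw : ∀ j, |(inner ℝ w (u j) : ℝ)| ≤ η) :
    ‖(Submodule.orthogonalProjection (Submodule.span ℝ (Set.range u)) w : E)‖
      ≤ 2 * Real.sqrt k * η := by
  set S := Submodule.span ℝ (Set.range u) with hS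
  set p : E := (Submodule.orthogonalProjection S w : E) with hp
  have hpS : p ∈ S := (Submodule.orthogonalProjection S w).2
  obtain ⟨c, hc⟩ := (Submodule.mem_span_range_iff_exists_fun ℝ).1 hpS
  have h1 : (inner ℝ w p : ℝ) = ‖p‖ ^ 2 := by
    have horth : w - p ∈ Sᗮ := Submodule.sub_starProjection_mem_orthogonal w
    have h0 : (inner ℝ p (w - p) : ℝ) = 0 := (Submodule.mem_orthogonal S _).1 horth p hpS
    rw [inner_sub_right, real_inner_comm w p] at h0
    rw [← real_inner_self_eq_norm_sq]
    linarith
  have h2 : (inner ℝ w p : ℝ) ≤ η * ∑ j, |c j| := by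
    rw [← hc, inner_sum, Finset.mul_sum]
    refine Finset.sum_le_sum fun j _ => ?_
    rw [real_inner_smul_right]
    calc c j * (inner ℝ w (u j) : ℝ) ≤ |c j * (inner ℝ w (u j) : ℝ)| := le_abs_self _
      _ = |c j| * |(inner ℝ w (u j) : ℝ)| := abs_mul _ _
      _ ≤ |c j| * η := mul_le_mul_of_nonneg_left (hw j) (abs_nonneg _)
      _ = η * |c j| := mul_comm _ _
  have h3 : (∑ j, |c j|) ^ 2 ≤ (k : ℝ) * ∑ j, c j ^ 2 := by
    have := Finset.sum_mul_sq_le_sq_mul_sq univ (fun _ : Fin k => (1 : ℝ)) (fun j => |c j|)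
    simpa [Finset.card_univ, sq_abs] using this
  have h4 : (1 / 4 : ℝ) * ∑ j, c j ^ 2 ≤ ‖p‖ ^ 2 := by
    have hg := gram_lb u hu hor c
    rw [hc] at hg
    have : (1 / 4 : ℝ) * ∑ j, c j ^ 2 ≤ (1 - ((k : ℝ) - 1) * ε) * ∑ j, c j ^ 2 := by
      apply mul_le_mul_of_nonneg_right (by linarith) (Finset.sum_nonneg fun j _ => sq_nonneg _)
    linarith
  have hsum_le : ∑ j, |c j| ≤ Real.sqrt k * (2 * ‖p‖) := by
    have hs1 : ∑ j, |c j| ≤ Real.sqrt ((k : ℝ) * ∑ j, c j ^ 2) := by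
      rw [show (∑ j, |c j|) = Real.sqrt ((∑ j, |c j|) ^ 2) from
        (Real.sqrt_sq (Finset.sum_nonneg fun j _ => abs_nonneg _)).symm]
      exact Real.sqrt_le_sqrt h3
    have hs2 : Real.sqrt ((k : ℝ) * ∑ j, c j ^ 2) ≤ Real.sqrt ((k : ℝ) * (4 * ‖p‖ ^ 2)) := by
      apply Real.sqrt_le_sqrt
      apply mul_le_mul_of_nonneg_left (by linarith) (Nat.cast_nonneg k)
    have hs3 : Real.sqrt ((k : ℝ) * (4 * ‖p‖ ^ 2)) = Real.sqrt k * (2 * ‖p‖) := by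
      rw [Real.sqrt_mul (Nat.cast_nonneg k), show (4 : ℝ) * ‖p‖ ^ 2 = (2 * ‖p‖) ^ 2 by ring,
        Real.sqrt_sq (by positivity)]
    linarith
  have hfinal : ‖p‖ ^ 2 ≤ η * (Real.sqrt k * (2 * ‖p‖)) := by
    calc ‖p‖ ^ 2 = (inner ℝ w p : ℝ) := h1.symm
      _ ≤ η * ∑ j, |c j| := h2
      _ ≤ η * (Real.sqrt k * (2 * ‖p‖)) := mul_le_mul_of_nonneg_left hsum_le hη
  rcases eq_or_lt_of_le (norm_nonneg p) with h0 | h0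
  · rw [← h0]; positivity
  · have : ‖p‖ * ‖p‖ ≤ (2 * Real.sqrt k * η) * ‖p‖ := by nlinarith
    exact le_of_mul_le_mul_right this h0

noncomputable def beta (n N : ℕ) (E : Set (EuclideanSpace ℝ (Fin N)))
    (x : EuclideanSpace ℝ (Fin N)) (r : ℝ) : ℝ :=
  sInf {b : ℝ | ∃ V : AffineSubspace ℝ (EuclideanSpace ℝ (Fin N)),
    (V : Set (EuclideanSpace ℝ (Fin N))).Nonempty ∧
    Module.finrank ℝ V.direction = n ∧
    b = (1 / r) * ⨆ y : ↥(E ∩ closedBall x r),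
      Metric.infDist (y : EuclideanSpace ℝ (Fin N)) (V : Set (EuclideanSpace ℝ (Fin N)))}

set_option maxHeartbeats 1600000 in
/-- Let `V` be an `n`-dimensional affine plane in `ℝᴺ` (`1 ≤ n ≤ N−1`),
`v ∈ V`, and `e` a unit vector. For any topological embedding `f : B(v,2r) → ℝᴺ` whose weak
quasisymmetry constant on `B(v,2r)` is at most `H`,
`β_{f(V)}(f v, |f(v+re) − f v|/2) ≤ 72 N (H − 1)`. -/
theorem beta_image_of_plane_le_weak_quasisymmetry (n N : ℕ) (hn : 1 ≤ n) (hnN : n ≤ N - 1)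
    (V : AffineSubspace ℝ (EuclideanSpace ℝ (Fin N)))
    (hV : Module.finrank ℝ V.direction = n)
    (v : EuclideanSpace ℝ (Fin N)) (hv : v ∈ V)
    (e : EuclideanSpace ℝ (Fin N)) (he : ‖e‖ = 1)
    (r : ℝ) (hr : 0 < r)
    (f : EuclideanSpace ℝ (Fin N) → EuclideanSpace ℝ (Fin N))
    (hemb : Topology.IsEmbedding ((Metric.closedBall v (2 * r)).restrict f))
    (H : ℝ)
    (hH : ∀ p ∈ closedBall v (2 * r), ∀ q ∈ closedBall v (2 * r), ∀ a ∈ closedBall v (2 * r),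
      dist p a ≤ dist q a → dist (f p) (f a) ≤ H * dist (f q) (f a)) :
    beta n N (f '' ((V : Set (EuclideanSpace ℝ (Fin N))) ∩ closedBall v (2 * r)))
        (f v) (dist (f (v + r • e)) (f v) / 2) ≤ 72 * N * (H - 1) := by
  classical
  have hN2 : 2 ≤ N := by omega
  have hv2 : v ∈ closedBall v (2 * r) := mem_closedBall_self (by linarith)
  have hve : v + r • e ∈ closedBall v (2 * r) := by
    rw [mem_closedBall, dist_eq_norm, add_sub_cancel_left, norm_smul, he,
      Real.norm_eq_abs, abs_of_pos hr]
    linarith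
  have hinj : Set.InjOn f (closedBall v (2 * r)) := by
    intro a ha b hb hab
    have : (⟨a, ha⟩ : closedBall v (2 * r)) = ⟨b, hb⟩ := hemb.injective hab
    exact congrArg Subtype.val this
  have hvne : v + r • e ≠ v := by
    intro hEq
    have h1 : r • e = 0 := by
      have := congrArg (· - v) hEq
      simpa [add_sub_cancel_left] using this
    have h2 : ‖r • e‖ = 0 := by rw [h1, norm_zero]
    rw [norm_smul, he, Real.norm_eq_abs, abs_of_pos hr, mul_one] at h2
    linarith
  have hs2 : 0 < dist (f (v + r • e)) (f v) := by
    rw [dist_pos]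
    exact fun hEq => hvne (hinj hve hv2 hEq)
  set s : ℝ := dist (f (v + r • e)) (f v) / 2 with hsdef
  have hs0 : 0 < s := by rw [hsdef]; linarith
  have h2s : dist (f (v + r • e)) (f v) = 2 * s := by rw [hsdef]; ring
  have hH1 : 1 ≤ H := by
    have h := hH (v + r • e) hve (v + r • e) hve v hv2 le_rfl
    nlinarith
  set T := {b : ℝ | ∃ W : AffineSubspace ℝ (EuclideanSpace ℝ (Fin N)),
    (W : Set (EuclideanSpace ℝ (Fin N))).Nonempty ∧
    Module.finrank ℝ W.direction = n ∧
    b = (1 / s) * ⨆ y : ↥(f '' ((V : Set (EuclideanSpace ℝ (Fin N))) ∩ closedBall v (2 * r))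
        ∩ closedBall (f v) s),
      Metric.infDist (y : EuclideanSpace ℝ (Fin N)) (W : Set (EuclideanSpace ℝ (Fin N)))}
    with hT
  have hbeta : beta n N (f '' ((V : Set (EuclideanSpace ℝ (Fin N))) ∩ closedBall v (2 * r)))
      (f v) s = sInf T := rfl
  rw [hbeta]
  have hbdd : BddBelow T := by
    refine ⟨0, fun b hb => ?_⟩
    obtain ⟨W, -, -, rfl⟩ := hb
    have h1 : (0:ℝ) ≤ 1 / s := by positivity
    exact mul_nonneg h1 (Real.iSup_nonneg fun y => Metric.infDist_nonneg)
  rcases le_or_gt 1 (72 * N * (H - 1)) with hc | hc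
  · -- trivial case
    set W0 : AffineSubspace ℝ (EuclideanSpace ℝ (Fin N)) :=
      AffineSubspace.mk' (f v) V.direction with hW0
    set b0 : ℝ := (1 / s) * ⨆ y : ↥(f '' ((V : Set (EuclideanSpace ℝ (Fin N)))
        ∩ closedBall v (2 * r)) ∩ closedBall (f v) s),
      Metric.infDist (y : EuclideanSpace ℝ (Fin N))
        (W0 : Set (EuclideanSpace ℝ (Fin N))) with hb0
    have hmem : b0 ∈ T := ⟨W0, ⟨f v, AffineSubspace.self_mem_mk' _ _⟩,
        by rw [hW0, AffineSubspace.direction_mk']; exact hV, rfl⟩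
    refine csInf_le_of_le hbdd hmem ?_
    have hsup : (⨆ y : ↥(f '' ((V : Set (EuclideanSpace ℝ (Fin N))) ∩ closedBall v (2 * r))
        ∩ closedBall (f v) s),
        Metric.infDist (y : EuclideanSpace ℝ (Fin N)) (W0 : Set (EuclideanSpace ℝ (Fin N))))
        ≤ s * (72 * N * (H - 1)) := by
      apply Real.iSup_le _ (by nlinarith)
      intro y
      calc Metric.infDist (y : EuclideanSpace ℝ (Fin N)) (W0 : Set (EuclideanSpace ℝ (Fin N)))
          ≤ dist (y : EuclideanSpace ℝ (Fin N)) (f v) :=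
            Metric.infDist_le_dist_of_mem (AffineSubspace.self_mem_mk' _ _)
        _ ≤ s := y.2.2
        _ ≤ s * (72 * N * (H - 1)) := by nlinarith
    rw [hb0, one_div, inv_mul_le_iff₀ hs0]
    exact hsup
  · -- hard case
    have hδ0 : (0:ℝ) ≤ H - 1 := by linarith
    have hNR : (2:ℝ) ≤ (N:ℝ) := by exact_mod_cast hN2
    have hNδ : (N:ℝ) * (H - 1) ≤ 1 / 72 := by nlinarith
    have hδ144 : H - 1 ≤ 1 / 144 := by nlinarith
    have hH145 : H ≤ 145 / 144 := by linarith
    set K : Submodule ℝ (EuclideanSpace ℝ (Fin N)) := V.direction with hKdef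
    have hfr : Module.finrank ℝ ↥K + Module.finrank ℝ ↥Kᗮ = N := by
      have h := Submodule.finrank_add_finrank_orthogonal K
      rwa [finrank_euclideanSpace_fin] at h
    set k' : ℕ := Module.finrank ℝ ↥Kᗮ with hk'def
    have hnk : n + k' = N := by rw [← hfr, hV]
    have hk'N : (k' : ℝ) ≤ (N : ℝ) := by exact_mod_cast (by omega : k' ≤ N)
    obtain ⟨w, hw1, hw2, hwmem⟩ :
        ∃ w : Fin k' → EuclideanSpace ℝ (Fin N), (∀ j, ‖w j‖ = 1) ∧
          (∀ i j, i ≠ j → (inner ℝ (w i) (w j) : ℝ) = 0) ∧ ∀ j, w j ∈ Kᗮ := by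
      refine ⟨fun j => ((stdOrthonormalBasis ℝ ↥Kᗮ) j : EuclideanSpace ℝ (Fin N)),
        fun j => ?_, fun i j hij => ?_, fun j => SetLike.coe_mem _⟩
      · show ‖((stdOrthonormalBasis ℝ ↥Kᗮ) j : EuclideanSpace ℝ (Fin N))‖ = 1
        have h : ‖(stdOrthonormalBasis ℝ ↥Kᗮ) j‖ = 1 :=
          (stdOrthonormalBasis ℝ ↥Kᗮ).orthonormal.1 j
        rwa [Submodule.coe_norm] at h
      · show (inner ℝ ((stdOrthonormalBasis ℝ ↥Kᗮ) i : EuclideanSpace ℝ (Fin N))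
          ((stdOrthonormalBasis ℝ ↥Kᗮ) j : EuclideanSpace ℝ (Fin N)) : ℝ) = 0
        have h : (inner ℝ ((stdOrthonormalBasis ℝ ↥Kᗮ) i) ((stdOrthonormalBasis ℝ ↥Kᗮ) j) : ℝ) = 0 :=
          (stdOrthonormalBasis ℝ ↥Kᗮ).orthonormal.2 hij
        rwa [Submodule.coe_inner] at h
    have hwperp : ∀ j, ∀ x ∈ V, (inner ℝ (x - v) (w j) : ℝ) = 0 := by
      intro j x hx
      have hxv : x - v ∈ K := by
        have h := AffineSubspace.vsub_mem_direction hx hv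
        rwa [vsub_eq_sub] at h
      exact (Submodule.mem_orthogonal K (w j)).1 (hwmem j) _ hxv
    set pt : Fin k' → ℝ → EuclideanSpace ℝ (Fin N) := fun j t => v + t • w j with hptdef
    have hdist_pt_v : ∀ j t, dist (pt j t) v = |t| := by
      intro j t
      show dist (v + t • w j) v = |t|
      rw [dist_eq_norm, add_sub_cancel_left, norm_smul, hw1, mul_one, Real.norm_eq_abs]
    have hpt_mem : ∀ j t, |t| ≤ 2*r → pt j t ∈ closedBall v (2*r) := by
      intro j t ht
      rw [mem_closedBall, hdist_pt_v]; exact ht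
    have hmemr : ∀ j, pt j r ∈ closedBall v (2*r) :=
      fun j => hpt_mem j r (by rw [abs_of_pos hr]; linarith)
    have hmemnr : ∀ j, pt j (-r) ∈ closedBall v (2*r) :=
      fun j => hpt_mem j (-r) (by rw [abs_neg, abs_of_pos hr]; linarith)
    have hdist_pp : ∀ i j, i ≠ j → ∀ a b : ℝ,
        dist (pt i a) (pt j b) = Real.sqrt (a^2 + b^2) := by
      intro i j hij a b
      have h1 : pt i a - pt j b = a • w i - b • w j := by
        show v + a • w i - (v + b • w j) = a • w i - b • w j
        abel
      rw [dist_eq_norm, h1]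
      have h2 : ‖a • w i - b • w j‖^2 = a^2 + b^2 := by
        rw [norm_sub_sq_real, norm_smul, norm_smul, hw1, hw1, real_inner_smul_left,
          real_inner_smul_right, hw2 i j hij]
        simp [Real.norm_eq_abs, sq_abs]
      rw [← h2, Real.sqrt_sq (norm_nonneg _)]
    have hdist_same : ∀ j (a b : ℝ), dist (pt j a) (pt j b) = |a - b| := by
      intro j a b
      have h1 : pt j a - pt j b = (a - b) • w j := by
        show v + a • w j - (v + b • w j) = (a - b) • w j
        rw [sub_smul]; abel
      rw [dist_eq_norm, h1, norm_smul, hw1, mul_one, Real.norm_eq_abs]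
    have hdist_x : ∀ x, x ∈ V → ∀ j (a : ℝ),
        dist x (pt j a) = Real.sqrt (‖x - v‖^2 + a^2) := by
      intro x hx j a
      have h1 : x - pt j a = (x - v) - a • w j := by
        show x - (v + a • w j) = (x - v) - a • w j
        abel
      rw [dist_eq_norm, h1]
      have h2 : ‖(x - v) - a • w j‖^2 = ‖x - v‖^2 + a^2 := by
        rw [norm_sub_sq_real, real_inner_smul_right, hwperp j x hx, norm_smul, hw1]
        simp [Real.norm_eq_abs, sq_abs]
      rw [← h2, Real.sqrt_sq (norm_nonneg _)]
    set F : EuclideanSpace ℝ (Fin N) := f v with hFdef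
    set A : Fin k' → EuclideanSpace ℝ (Fin N) := fun j => f (pt j r) with hAdef
    set B : Fin k' → EuclideanSpace ℝ (Fin N) := fun j => f (pt j (-r)) with hBdef
    set m : Fin k' → EuclideanSpace ℝ (Fin N) := fun j => A j - B j with hmdef
    have hd_r : ∀ j, dist (pt j r) v = dist (v + r • e) v := by
      intro j
      rw [hdist_pt_v, abs_of_pos hr, dist_eq_norm, add_sub_cancel_left, norm_smul, he,
        Real.norm_eq_abs, abs_of_pos hr, mul_one]
    have hd_nr : ∀ j, dist (pt j (-r)) v = dist (v + r • e) v := by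
      intro j
      rw [hdist_pt_v, abs_neg, abs_of_pos hr, dist_eq_norm, add_sub_cancel_left, norm_smul, he,
        Real.norm_eq_abs, abs_of_pos hr, mul_one]
    have dA_ub : ∀ j, dist (A j) F ≤ H * (2*s) := by
      intro j
      have h : dist (A j) F ≤ H * dist (f (v + r • e)) F :=
        hH (pt j r) (hmemr j) (v + r • e) hve v hv2 (le_of_eq (hd_r j))
      rwa [show dist (f (v + r • e)) F = 2 * s from h2s] at h
    have dA_lb : ∀ j, 2*s ≤ H * dist (A j) F := by
      intro j
      have h : dist (f (v + r • e)) F ≤ H * dist (A j) F :=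
        hH (v + r • e) hve (pt j r) (hmemr j) v hv2 (le_of_eq (hd_r j).symm)
      rwa [show dist (f (v + r • e)) F = 2 * s from h2s] at h
    have dB_ub : ∀ j, dist (B j) F ≤ H * (2*s) := by
      intro j
      have h : dist (B j) F ≤ H * dist (f (v + r • e)) F :=
        hH (pt j (-r)) (hmemnr j) (v + r • e) hve v hv2 (le_of_eq (hd_nr j))
      rwa [show dist (f (v + r • e)) F = 2 * s from h2s] at h
    have dm_lb0 : ∀ j, dist F (A j) ≤ H * dist (B j) (A j) := by
      intro j
      refine hH v hv2 (pt j (-r)) (hmemnr j) (pt j r) (hmemr j) ?_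
      rw [dist_comm v, hdist_pt_v, hdist_same, abs_of_pos hr,
        show -r - r = -(2*r) by ring, abs_neg, abs_of_pos (by linarith : (0:ℝ) < 2*r)]
      linarith
    have hm_lb : ∀ j, (19/10)*s ≤ ‖m j‖ := by
      intro j
      have h3 : dist (A j) F ≤ H * ‖m j‖ := by
        have hnm : ‖m j‖ = dist (B j) (A j) := by
          show ‖A j - B j‖ = _
          rw [← dist_eq_norm, dist_comm]
        rw [hnm]
        have h2 := dm_lb0 j
        rwa [dist_comm F (A j)] at h2
      exact m_lb hH1 hH145 hs0 (dA_lb j) h3 dist_nonneg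
    have hmpos : ∀ j, (0:ℝ) < ‖m j‖ := fun j => lt_of_lt_of_le (by linarith) (hm_lb j)
    set u : Fin k' → EuclideanSpace ℝ (Fin N) := fun j => ‖m j‖⁻¹ • m j with hudef
    have hu1 : ∀ j, ‖u j‖ = 1 := by
      intro j
      show ‖(‖m j‖⁻¹ • m j)‖ = 1
      rw [norm_smul, norm_inv, norm_norm, inv_mul_cancel₀ (ne_of_gt (hmpos j))]
    have hcross : ∀ i j, i ≠ j → |(inner ℝ (u i) (u j) : ℝ)| ≤ 12*(H-1) := by
      intro i j hij
      have hsym : j ≠ i := Ne.symm hij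
      have q1 : dist (pt j (-r)) (pt i r) = dist (pt j r) (pt i r) := by
        rw [hdist_pp j i hsym, hdist_pp j i hsym]
        congr 1
        ring
      have q2 : dist (pt j (-r)) (pt i (-r)) = dist (pt j r) (pt i (-r)) := by
        rw [hdist_pp j i hsym, hdist_pp j i hsym]
        congr 1
        ring
      have q3 : dist (pt i (-r)) (pt j r) = dist (pt i r) (pt j r) := by
        rw [hdist_pp i j hij, hdist_pp i j hij]
        congr 1
        ring
      have e1 : dist (A i) (B j) ≤ H * dist (A i) (A j) := by
        have h : dist (B j) (A i) ≤ H * dist (A j) (A i) :=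
          hH (pt j (-r)) (hmemnr j) (pt j r) (hmemr j) (pt i r) (hmemr i) (le_of_eq q1)
        rwa [dist_comm (B j) (A i), dist_comm (A j) (A i)] at h
      have e2 : dist (A i) (A j) ≤ H * dist (A i) (B j) := by
        have h : dist (A j) (A i) ≤ H * dist (B j) (A i) :=
          hH (pt j r) (hmemr j) (pt j (-r)) (hmemnr j) (pt i r) (hmemr i) (le_of_eq q1.symm)
        rwa [dist_comm (B j) (A i), dist_comm (A j) (A i)] at h
      have e3 : dist (B i) (B j) ≤ H * dist (B i) (A j) := by
        have h : dist (B j) (B i) ≤ H * dist (A j) (B i) :=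
          hH (pt j (-r)) (hmemnr j) (pt j r) (hmemr j) (pt i (-r)) (hmemnr i) (le_of_eq q2)
        rwa [dist_comm (B j) (B i), dist_comm (A j) (B i)] at h
      have e4 : dist (B i) (A j) ≤ H * dist (B i) (B j) := by
        have h : dist (A j) (B i) ≤ H * dist (B j) (B i) :=
          hH (pt j r) (hmemr j) (pt j (-r)) (hmemnr j) (pt i (-r)) (hmemnr i) (le_of_eq q2.symm)
        rwa [dist_comm (B j) (B i), dist_comm (A j) (B i)] at h
      have e5 : dist (B i) (A j) ≤ H * dist (A i) (A j) :=
        hH (pt i (-r)) (hmemnr i) (pt i r) (hmemr i) (pt j r) (hmemr j) (le_of_eq q3)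
      have d1_ub : dist (A i) (A j) ≤ 4*H*s := by
        have ht := dist_triangle (A i) F (A j)
        have hc1 : dist F (A j) = dist (A j) F := dist_comm _ _
        have hc2 := dA_ub i
        have hc3 := dA_ub j
        linarith
      have s1 : |dist (A i) (B j) ^ 2 - dist (A i) (A j) ^ 2|
          ≤ (H^2 - 1) * H^2 * dist (A i) (A j) ^ 2 := by
        have h := abs_sq_sub_le hH1 dist_nonneg dist_nonneg dist_nonneg e1 e2 le_rfl
        simpa using h
      have s2 : |dist (B i) (B j) ^ 2 - dist (B i) (A j) ^ 2|
          ≤ (H^2 - 1) * H^2 * (H * dist (A i) (A j)) ^ 2 := by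
        have h := abs_sq_sub_le hH1 dist_nonneg dist_nonneg
          (by positivity : (0:ℝ) ≤ H * dist (A i) (A j)) e3 e4 e5
        simpa using h
      have hif : (inner ℝ (m i) (m j) : ℝ) = (dist (A i) (B j) ^ 2 - dist (A i) (A j) ^ 2
          + (dist (B i) (A j) ^ 2 - dist (B i) (B j) ^ 2))/2 := by
        have h : (inner ℝ (A i - B i) (A j - B j) : ℝ)
            = (‖A i - B j‖^2 - ‖A i - A j‖^2 + ‖B i - A j‖^2 - ‖B i - B j‖^2)/2 :=
          inner_four (A i) (B i) (A j) (B j)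
        show (inner ℝ (A i - B i) (A j - B j) : ℝ) = _
        rw [h, dist_eq_norm, dist_eq_norm, dist_eq_norm, dist_eq_norm]
        ring
      have s3 : |(inner ℝ (m i) (m j) : ℝ)|
          ≤ ((H^2 - 1) * H^2 * dist (A i) (A j) ^ 2
            + (H^2 - 1) * H^2 * (H * dist (A i) (A j)) ^ 2)/2 := by
        rw [hif, abs_div, abs_two]
        have h1 := abs_add_le (dist (A i) (B j) ^ 2 - dist (A i) (A j) ^ 2)
          (dist (B i) (A j) ^ 2 - dist (B i) (B j) ^ 2)
        have h2 : |dist (B i) (A j) ^ 2 - dist (B i) (B j) ^ 2|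
            = |dist (B i) (B j) ^ 2 - dist (B i) (A j) ^ 2| := abs_sub_comm _ _
        rw [h2] at h1
        have := le_trans h1 (add_le_add s1 s2)
        linarith
      have s4 : |(inner ℝ (m i) (m j) : ℝ)| ≤ 12*(H-1)*(‖m i‖ * ‖m j‖) :=
        cross_final hH1 hH145 hs0 dist_nonneg d1_ub (hm_lb i) (hm_lb j) s3
      have habsu : |(inner ℝ (u i) (u j) : ℝ)|
          = ‖m i‖⁻¹ * ‖m j‖⁻¹ * |(inner ℝ (m i) (m j) : ℝ)| := by
        show |(inner ℝ (‖m i‖⁻¹ • m i) (‖m j‖⁻¹ • m j) : ℝ)| = _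
        rw [real_inner_smul_left, real_inner_smul_right, abs_mul, abs_mul,
          abs_inv, abs_inv, abs_norm, abs_norm]
        ring
      rw [habsu]
      calc ‖m i‖⁻¹ * ‖m j‖⁻¹ * |(inner ℝ (m i) (m j) : ℝ)|
          ≤ ‖m i‖⁻¹ * ‖m j‖⁻¹ * (12*(H-1)*(‖m i‖ * ‖m j‖)) := by
            apply mul_le_mul_of_nonneg_left s4
            have := hmpos i
            have := hmpos j
            positivity
        _ = 12*(H-1) := by
            rw [show ‖m i‖⁻¹ * ‖m j‖⁻¹ * (12*(H-1)*(‖m i‖ * ‖m j‖))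
              = 12*(H-1) * ((‖m i‖⁻¹ * ‖m i‖) * (‖m j‖⁻¹ * ‖m j‖)) by ring,
              inv_mul_cancel₀ (ne_of_gt (hmpos i)), inv_mul_cancel₀ (ne_of_gt (hmpos j))]
            ring
    have hε34 : ((k' : ℝ) - 1) * (12*(H-1)) ≤ 3/4 := eps_34 hk'N hNδ hδ0
    have hli : LinearIndependent ℝ u := by
      rw [Fintype.linearIndependent_iff]
      intro g hg i
      have hgr := gram_lb u hu1 hcross g
      rw [hg, norm_zero] at hgr
      have hS0 : ∑ j, g j ^ 2 ≤ 0 := by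
        refine sum_le_zero_of hε34 ?_ (Finset.sum_nonneg fun j _ => sq_nonneg _)
        calc (1 - ((k' : ℝ) - 1) * (12*(H-1))) * ∑ j, g j ^ 2 ≤ (0:ℝ)^2 := hgr
          _ = 0 := by norm_num
      have h1 : g i ^ 2 ≤ 0 :=
        le_trans (Finset.single_le_sum (fun j _ => sq_nonneg (g j)) (mem_univ i)) hS0
      have h2 : g i ^ 2 = 0 := le_antisymm h1 (sq_nonneg _)
      exact pow_eq_zero_iff two_ne_zero |>.1 h2
    set S : Submodule ℝ (EuclideanSpace ℝ (Fin N)) := Submodule.span ℝ (Set.range u) with hSdef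
    have hSrank : Module.finrank ℝ ↥S = k' := by
      rw [hSdef, finrank_span_eq_card hli, Fintype.card_fin]
    have hSperp : Module.finrank ℝ ↥Sᗮ = n := by
      have h := Submodule.finrank_add_finrank_orthogonal S
      rw [hSrank, finrank_euclideanSpace_fin] at h
      omega
    set W1 : AffineSubspace ℝ (EuclideanSpace ℝ (Fin N)) := AffineSubspace.mk' F Sᗮ with hW1
    set b1 : ℝ := (1 / s) * ⨆ y : ↥(f '' ((V : Set (EuclideanSpace ℝ (Fin N)))
        ∩ closedBall v (2 * r)) ∩ closedBall (f v) s),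
      Metric.infDist (y : EuclideanSpace ℝ (Fin N))
        (W1 : Set (EuclideanSpace ℝ (Fin N))) with hb1
    have hmem : b1 ∈ T := ⟨W1, ⟨F, AffineSubspace.self_mem_mk' _ _⟩,
        by rw [hW1, AffineSubspace.direction_mk']; exact hSperp, rfl⟩
    refine csInf_le_of_le hbdd hmem ?_
    rw [hb1, one_div, inv_mul_le_iff₀ hs0]
    have hrhs0 : (0:ℝ) ≤ s * (72 * N * (H - 1)) :=
      mul_nonneg hs0.le (mul_nonneg (mul_nonneg (by norm_num) (Nat.cast_nonneg N)) hδ0)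
    apply Real.iSup_le _ hrhs0
    intro y
    obtain ⟨hyE, hyball⟩ := y.2
    obtain ⟨x, ⟨hxV, hx2r⟩, hfx⟩ := hyE
    have hyF : dist (y : EuclideanSpace ℝ (Fin N)) F ≤ s := hyball
    have hips : ∀ j, |(inner ℝ ((y : EuclideanSpace ℝ (Fin N)) - F) (u j) : ℝ)|
        ≤ 8*(H-1)*s := by
      intro j
      have q : dist (pt j r) x = dist (pt j (-r)) x := by
        rw [dist_comm (pt j r) x, dist_comm (pt j (-r)) x,
          hdist_x x hxV j r, hdist_x x hxV j (-r)]
        congr 1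
        ring
      have e1 : dist (y : EuclideanSpace ℝ (Fin N)) (A j)
          ≤ H * dist (y : EuclideanSpace ℝ (Fin N)) (B j) := by
        have h : dist (A j) (f x) ≤ H * dist (B j) (f x) :=
          hH (pt j r) (hmemr j) (pt j (-r)) (hmemnr j) x hx2r (le_of_eq q)
        rw [hfx] at h
        rwa [dist_comm (A j) _, dist_comm (B j) _] at h
      have e2 : dist (y : EuclideanSpace ℝ (Fin N)) (B j)
          ≤ H * dist (y : EuclideanSpace ℝ (Fin N)) (A j) := by
        have h : dist (B j) (f x) ≤ H * dist (A j) (f x) :=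
          hH (pt j (-r)) (hmemnr j) (pt j r) (hmemr j) x hx2r (le_of_eq q.symm)
        rw [hfx] at h
        rwa [dist_comm (A j) _, dist_comm (B j) _] at h
      have qv : dist (pt j r) v = dist (pt j (-r)) v := by
        rw [hdist_pt_v, hdist_pt_v, abs_neg]
      have eF1 : dist F (A j) ≤ H * dist F (B j) := by
        have h : dist (A j) F ≤ H * dist (B j) F :=
          hH (pt j r) (hmemr j) (pt j (-r)) (hmemnr j) v hv2 (le_of_eq qv)
        rwa [dist_comm (A j) F, dist_comm (B j) F] at h
      have eF2 : dist F (B j) ≤ H * dist F (A j) := by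
        have h : dist (B j) F ≤ H * dist (A j) F :=
          hH (pt j (-r)) (hmemnr j) (pt j r) (hmemr j) v hv2 (le_of_eq qv.symm)
        rwa [dist_comm (A j) F, dist_comm (B j) F] at h
      have yB_ub : dist (y : EuclideanSpace ℝ (Fin N)) (B j) ≤ s + H * (2*s) := by
        have ht := dist_triangle (y : EuclideanSpace ℝ (Fin N)) F (B j)
        have hc1 : dist F (B j) = dist (B j) F := dist_comm _ _
        have hc2 := dB_ub j
        linarith
      have FA_ub : dist F (A j) ≤ H * (2*s) := by
        have hc1 : dist F (A j) = dist (A j) F := dist_comm _ _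
        have hc2 := dA_ub j
        linarith
      have bound1 : |dist (y : EuclideanSpace ℝ (Fin N)) (A j) ^ 2
          - dist (y : EuclideanSpace ℝ (Fin N)) (B j) ^ 2|
          ≤ (H^2 - 1) * H^2 * (s + H * (2*s)) ^ 2 :=
        abs_sq_sub_le hH1 dist_nonneg dist_nonneg (by positivity) e1 e2 yB_ub
      have bound2 : |dist F (B j) ^ 2 - dist F (A j) ^ 2|
          ≤ (H^2 - 1) * H^2 * (H * (2*s)) ^ 2 :=
        abs_sq_sub_le hH1 dist_nonneg dist_nonneg (by positivity) eF2 eF1 FA_ub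
      have hid : (inner ℝ ((y : EuclideanSpace ℝ (Fin N)) - F) (m j) : ℝ)
          = (dist (y : EuclideanSpace ℝ (Fin N)) (B j) ^ 2
            - dist (y : EuclideanSpace ℝ (Fin N)) (A j) ^ 2
            + (dist F (A j) ^ 2 - dist F (B j) ^ 2))/2 := by
        have h : (inner ℝ ((y : EuclideanSpace ℝ (Fin N)) - F) (A j - B j) : ℝ)
            = (‖(y : EuclideanSpace ℝ (Fin N)) - B j‖^2
              - ‖(y : EuclideanSpace ℝ (Fin N)) - A j‖^2
              + ‖F - A j‖^2 - ‖F - B j‖^2)/2 :=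
          inner_four (y : EuclideanSpace ℝ (Fin N)) F (A j) (B j)
        show (inner ℝ ((y : EuclideanSpace ℝ (Fin N)) - F) (A j - B j) : ℝ) = _
        rw [h, dist_eq_norm, dist_eq_norm, dist_eq_norm, dist_eq_norm]
        ring
      have hXb : |(inner ℝ ((y : EuclideanSpace ℝ (Fin N)) - F) (m j) : ℝ)|
          ≤ ((H^2 - 1) * H^2 * (s + H * (2*s)) ^ 2
            + (H^2 - 1) * H^2 * (H * (2*s)) ^ 2)/2 := by
        rw [hid, abs_div, abs_two]
        have h1 := abs_add_le (dist (y : EuclideanSpace ℝ (Fin N)) (B j) ^ 2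
            - dist (y : EuclideanSpace ℝ (Fin N)) (A j) ^ 2)
          (dist F (A j) ^ 2 - dist F (B j) ^ 2)
        have h2 : |dist (y : EuclideanSpace ℝ (Fin N)) (B j) ^ 2
            - dist (y : EuclideanSpace ℝ (Fin N)) (A j) ^ 2|
            = |dist (y : EuclideanSpace ℝ (Fin N)) (A j) ^ 2
              - dist (y : EuclideanSpace ℝ (Fin N)) (B j) ^ 2| := abs_sub_comm _ _
        have h3 : |dist F (A j) ^ 2 - dist F (B j) ^ 2|
            = |dist F (B j) ^ 2 - dist F (A j) ^ 2| := abs_sub_comm _ _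
        rw [h2, h3] at h1
        have := le_trans h1 (add_le_add bound1 bound2)
        linarith
      have hXc := eta_final hH1 hH145 hs0 (hm_lb j) hXb
      have habsu : |(inner ℝ ((y : EuclideanSpace ℝ (Fin N)) - F) (u j) : ℝ)|
          = ‖m j‖⁻¹ * |(inner ℝ ((y : EuclideanSpace ℝ (Fin N)) - F) (m j) : ℝ)| := by
        show |(inner ℝ ((y : EuclideanSpace ℝ (Fin N)) - F) (‖m j‖⁻¹ • m j) : ℝ)| = _
        rw [real_inner_smul_right, abs_mul, abs_inv, abs_norm]
      rw [habsu]
      calc ‖m j‖⁻¹ * |(inner ℝ ((y : EuclideanSpace ℝ (Fin N)) - F) (m j) : ℝ)|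
          ≤ ‖m j‖⁻¹ * ((8*(H-1)*s) * ‖m j‖) := by
            apply mul_le_mul_of_nonneg_left hXc
            have := hmpos j
            positivity
        _ = 8*(H-1)*s := by
            rw [show ‖m j‖⁻¹ * ((8*(H-1)*s) * ‖m j‖)
              = (8*(H-1)*s) * (‖m j‖⁻¹ * ‖m j‖) by ring,
              inv_mul_cancel₀ (ne_of_gt (hmpos j))]
            ring
    have hproj := proj_bd u hu1 hε34 hcross ((y : EuclideanSpace ℝ (Fin N)) - F)
      (by positivity : (0:ℝ) ≤ 8*(H-1)*s) hips
    set pb : EuclideanSpace ℝ (Fin N) :=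
      (Submodule.orthogonalProjection S ((y : EuclideanSpace ℝ (Fin N)) - F) : EuclideanSpace ℝ (Fin N))
      with hpb
    have hz : (y : EuclideanSpace ℝ (Fin N)) - pb ∈ W1 := by
      rw [hW1, AffineSubspace.mem_mk', vsub_eq_sub]
      have h1 : (y : EuclideanSpace ℝ (Fin N)) - pb - F
          = ((y : EuclideanSpace ℝ (Fin N)) - F) - pb := by abel
      rw [h1]
      exact Submodule.sub_starProjection_mem_orthogonal _
    have hdistz : dist (y : EuclideanSpace ℝ (Fin N)) ((y : EuclideanSpace ℝ (Fin N)) - pb)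
        = ‖pb‖ := by
      rw [dist_eq_norm, sub_sub_cancel]
    have hsq : Real.sqrt (k' : ℝ) ≤ (N : ℝ) := by
      rw [show (N:ℝ) = Real.sqrt ((N:ℝ)^2) from (Real.sqrt_sq (by positivity)).symm]
      exact Real.sqrt_le_sqrt (le_sq_of hk'N hNR)
    calc Metric.infDist (y : EuclideanSpace ℝ (Fin N)) (W1 : Set (EuclideanSpace ℝ (Fin N)))
        ≤ dist (y : EuclideanSpace ℝ (Fin N)) ((y : EuclideanSpace ℝ (Fin N)) - pb) :=
          Metric.infDist_le_dist_of_mem hz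
      _ = ‖pb‖ := hdistz
      _ ≤ 2 * Real.sqrt (k' : ℝ) * (8*(H-1)*s) := hproj
      _ ≤ s * (72 * N * (H - 1)) :=
          final_comb hsq hδ0 hs0.le (Real.sqrt_nonneg _)
end

section
/- Suppose (f, E, A) is ε-almost affine with ε ≤ a, and x, y ∈ E, r, s > 0, a ≥ 1 satisfy |x−y| ≤ a·max(r,s), τ(x,r,y,s) ≤ a, and dist(z, {x,y}) ≤ a·max(r,s) for some z ∈ ℝⁿ. Then |A_{x,r}(z) − A_{y,s}(z)| ≤ C(a)·ε·min(‖A'_{x,r}‖, ‖A'_{y,s}‖)·max(r,s) for a constant C(a) depending only on a. -/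
open Metric
set_option maxHeartbeats 1000000

lemma aux_diff_eval {n N : ℕ}
    (T₁ T₂ : ContinuousAffineMap ℝ (EuclideanSpace ℝ (Fin n)) (EuclideanSpace ℝ (Fin N)))
    (x z : EuclideanSpace ℝ (Fin n)) :
    T₁ z - T₂ z = (T₁ x - T₂ x) + ((T₁.contLinear - T₂.contLinear) (z - x)) := by
  have h₁ := T₁.contLinear_map_vsub z x
  have h₂ := T₂.contLinear_map_vsub z x
  simp only [vsub_eq_sub] at h₁ h₂
  simp only [ContinuousLinearMap.sub_apply, h₁, h₂]
  abel

lemma aux_step {n N : ℕ} {f : EuclideanSpace ℝ (Fin n) → EuclideanSpace ℝ (Fin N)}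
    {E : Set (EuclideanSpace ℝ (Fin n))}
    {A : EuclideanSpace ℝ (Fin n) → ℝ →
      ContinuousAffineMap ℝ (EuclideanSpace ℝ (Fin n)) (EuclideanSpace ℝ (Fin N))}
    {ε : ℝ} (h : IsAlmostAffine n N f E A ε) (hε : 0 ≤ ε)
    {x y : EuclideanSpace ℝ (Fin n)} (hx : x ∈ E) (hy : y ∈ E)
    {r s : ℝ} (hr : 0 < r) (hs : 0 < s)
    (hxy : dist x y ≤ s) (h1 : 1 / 2 ≤ r / s) (h2 : r / s ≤ 2) :
    ‖(A x r).contLinear - (A y s).contLinear‖ ≤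
        ε * min ‖(A x r).contLinear‖ ‖(A y s).contLinear‖ ∧
    ∀ z, dist ((A x r) z) ((A y s) z) ≤
      ε * ‖(A x r).contLinear‖ * r + ε * ‖(A y s).contLinear‖ * s
        + ε * (min ‖(A x r).contLinear‖ ‖(A y s).contLinear‖) * dist z x := by
  obtain ⟨hcomp, haa⟩ := h
  have hC := hcomp x hx y hy r s hr hs (hxy.trans (le_max_right r s)) h1 h2
  refine ⟨hC, fun z => ?_⟩
  have hx1 : dist (f x) ((A x r) x) ≤ ε * ‖(A x r).contLinear‖ * r :=
    haa x hx r hr x ⟨hx, by simp [hr.le]⟩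
  have hx2 : dist (f x) ((A y s) x) ≤ ε * ‖(A y s).contLinear‖ * s :=
    haa y hy s hs x ⟨hx, by simpa [mem_closedBall] using hxy⟩
  have hbase : dist ((A x r) x) ((A y s) x) ≤
      ε * ‖(A x r).contLinear‖ * r + ε * ‖(A y s).contLinear‖ * s :=
    (dist_triangle _ (f x) _).trans (by rw [dist_comm ((A x r) x)]; exact add_le_add hx1 hx2)
  calc dist ((A x r) z) ((A y s) z)
      = ‖((A x r) x - (A y s) x) + ((A x r).contLinear - (A y s).contLinear) (z - x)‖ := by
        rw [dist_eq_norm, aux_diff_eval _ _ x z]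
    _ ≤ ‖(A x r) x - (A y s) x‖ + ‖((A x r).contLinear - (A y s).contLinear) (z - x)‖ :=
        norm_add_le _ _
    _ ≤ dist ((A x r) x) ((A y s) x) +
        ‖(A x r).contLinear - (A y s).contLinear‖ * ‖z - x‖ := by
        rw [dist_eq_norm]
        exact add_le_add le_rfl (ContinuousLinearMap.le_opNorm _ _)
    _ ≤ (ε * ‖(A x r).contLinear‖ * r + ε * ‖(A y s).contLinear‖ * s) +
        (ε * min ‖(A x r).contLinear‖ ‖(A y s).contLinear‖) * dist z x := by
        rw [← dist_eq_norm z x] at *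
        exact add_le_add hbase (mul_le_mul_of_nonneg_right hC dist_nonneg)
lemma aux_chain {n N : ℕ} {f : EuclideanSpace ℝ (Fin n) → EuclideanSpace ℝ (Fin N)}
    {E : Set (EuclideanSpace ℝ (Fin n))}
    {A : EuclideanSpace ℝ (Fin n) → ℝ →
      ContinuousAffineMap ℝ (EuclideanSpace ℝ (Fin n)) (EuclideanSpace ℝ (Fin N))}
    {ε a : ℝ} (h : IsAlmostAffine n N f E A ε) (hε : 0 < ε) (ha : 1 ≤ a) (hεa : ε ≤ a) :
    ∀ k : ℕ, ∀ x ∈ E, ∀ s r : ℝ, 0 < s → s ≤ r → r ≤ 2 ^ k * s →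
      (‖(A x r).contLinear‖ ≤ (1 + a) ^ k * ‖(A x s).contLinear‖ ∧
       ‖(A x s).contLinear‖ ≤ (1 + a) ^ k * ‖(A x r).contLinear‖) ∧
      ∀ z, dist ((A x r) z) ((A x s) z) ≤
        k * ε * (1 + a) ^ (k + 1) * ‖(A x s).contLinear‖ * (2 * r + dist z x) := by
  intro k
  induction k with
  | zero =>
    intro x hx s r hs hsr hrs
    have : r = s := le_antisymm (by simpa using hrs) hsr
    subst this
    simp
  | succ k ih =>
    intro x hx s r hs hsr hrs
    have hr : 0 < r := hs.trans_le hsr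
    have hP : (1 : ℝ) ≤ 1 + a := by linarith
    have hP0 : (0 : ℝ) ≤ 1 + a := by linarith
    have hLs : (0:ℝ) ≤ ‖(A x s).contLinear‖ := norm_nonneg _
    by_cases hc : r ≤ 2 * s
    · -- single step between s and r
      have h1 : 1 / 2 ≤ r / s := by
        rw [le_div_iff₀ hs]; linarith
      have h2 : r / s ≤ 2 := by rw [div_le_iff₀ hs]; linarith
      obtain ⟨hC, hd⟩ := aux_step h hε.le hx hx hr hs (by simpa using hs.le) h1 h2
      have hmin1 : min ‖(A x r).contLinear‖ ‖(A x s).contLinear‖ ≤ ‖(A x s).contLinear‖ :=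
        min_le_right _ _
      have hmin2 : min ‖(A x r).contLinear‖ ‖(A x s).contLinear‖ ≤ ‖(A x r).contLinear‖ :=
        min_le_left _ _
      have hLr1 : ‖(A x r).contLinear‖ ≤ (1 + a) * ‖(A x s).contLinear‖ := by
        have := norm_sub_norm_le ((A x r).contLinear) ((A x s).contLinear)
        nlinarith [hC.trans (mul_le_mul_of_nonneg_left hmin1 hε.le)]
      have hLr2 : ‖(A x s).contLinear‖ ≤ (1 + a) * ‖(A x r).contLinear‖ := by
        have := norm_sub_norm_le ((A x s).contLinear) ((A x r).contLinear)
        rw [norm_sub_rev] at this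
        nlinarith [hC.trans (mul_le_mul_of_nonneg_left hmin2 hε.le)]
      have hpow : (1 + a) ≤ (1 + a) ^ (k + 1) := by
        calc (1 + a) = (1 + a) ^ 1 := (pow_one _).symm
        _ ≤ (1 + a) ^ (k + 1) := pow_le_pow_right₀ hP (by omega)
      constructor
      · constructor
        · exact hLr1.trans (mul_le_mul_of_nonneg_right hpow hLs)
        · exact hLr2.trans (mul_le_mul_of_nonneg_right hpow (norm_nonneg _))
      · intro z
        have hd' := hd z
        have hdz : (0:ℝ) ≤ dist z x := dist_nonneg
        have step1 : ε * ‖(A x r).contLinear‖ * r + ε * ‖(A x s).contLinear‖ * s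
            + ε * (min ‖(A x r).contLinear‖ ‖(A x s).contLinear‖) * dist z x
            ≤ ε * ‖(A x s).contLinear‖ * ((2 + a) * r + dist z x) := by
          have e1 : ε * ‖(A x r).contLinear‖ * r ≤ ε * ((1 + a) * ‖(A x s).contLinear‖) * r := by
            apply mul_le_mul_of_nonneg_right _ hr.le
            exact mul_le_mul_of_nonneg_left hLr1 hε.le
          have e2 : ε * ‖(A x s).contLinear‖ * s ≤ ε * ‖(A x s).contLinear‖ * r :=
            mul_le_mul_of_nonneg_left hsr (by positivity)
          have e3 : ε * (min ‖(A x r).contLinear‖ ‖(A x s).contLinear‖) * dist z x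
              ≤ ε * ‖(A x s).contLinear‖ * dist z x := by
            apply mul_le_mul_of_nonneg_right _ hdz
            exact mul_le_mul_of_nonneg_left hmin1 hε.le
          nlinarith
        have step2 : ε * ‖(A x s).contLinear‖ * ((2 + a) * r + dist z x)
            ≤ (↑(k+1) : ℝ) * ε * (1 + a) ^ (k + 2) * ‖(A x s).contLinear‖ * (2 * r + dist z x) := by
          have e4 : (2 + a) * r + dist z x ≤ (1 + a) * (2 * r + dist z x) := by nlinarith
          have e5 : ε * ‖(A x s).contLinear‖ * ((1 + a) * (2 * r + dist z x))
              = 1 * ε * ((1+a)^1) * ‖(A x s).contLinear‖ * (2 * r + dist z x) := by ring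
          calc ε * ‖(A x s).contLinear‖ * ((2 + a) * r + dist z x)
              ≤ ε * ‖(A x s).contLinear‖ * ((1 + a) * (2 * r + dist z x)) := by
                apply mul_le_mul_of_nonneg_left e4 (by positivity)
            _ = 1 * ε * ((1+a)^1) * ‖(A x s).contLinear‖ * (2 * r + dist z x) := e5
            _ ≤ (↑(k+1) : ℝ) * ε * (1 + a) ^ (k + 2) * ‖(A x s).contLinear‖ * (2 * r + dist z x) := by
                gcongr
                · push_cast; linarith [Nat.cast_nonneg (α := ℝ) k]
                · omega
        push_cast at step2 ⊢
        linarith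
    · -- recursive case through r/2
      push_neg at hc
      have hs2 : s ≤ r / 2 := by linarith
      have hr2 : 0 < r / 2 := by linarith
      have hr2k : r / 2 ≤ 2 ^ k * s := by
        rw [pow_succ] at hrs; linarith
      obtain ⟨⟨ih1, ih2⟩, ihd⟩ := ih x hx s (r / 2) hs hs2 hr2k
      have h1 : 1 / 2 ≤ r / (r / 2) := by
        rw [div_div_eq_mul_div, div_le_div_iff₀ (by norm_num) hr]; nlinarith
      have h2 : r / (r / 2) ≤ 2 := by
        rw [div_div_eq_mul_div, div_le_iff₀ hr]; nlinarith
      obtain ⟨hC, hd⟩ := aux_step h hε.le hx hx hr hr2 (by simpa using hr2.le) h1 h2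
      set L' := ‖(A x (r/2)).contLinear‖ with hL'
      have hL'0 : (0:ℝ) ≤ L' := norm_nonneg _
      have hmin1 : min ‖(A x r).contLinear‖ L' ≤ L' := min_le_right _ _
      have hmin2 : min ‖(A x r).contLinear‖ L' ≤ ‖(A x r).contLinear‖ := min_le_left _ _
      have hLr1 : ‖(A x r).contLinear‖ ≤ (1 + a) * L' := by
        have t0 := norm_sub_norm_le ((A x r).contLinear) ((A x (r/2)).contLinear)
        have t1 : ‖(A x r).contLinear - (A x (r/2)).contLinear‖ ≤ ε * L' :=
          hC.trans (mul_le_mul_of_nonneg_left hmin1 hε.le)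
        have t2 : ε * L' ≤ a * L' := mul_le_mul_of_nonneg_right hεa hL'0
        have t3 : (1 + a) * L' = L' + a * L' := by ring
        linarith
      have hLr2 : L' ≤ (1 + a) * ‖(A x r).contLinear‖ := by
        have t0 := norm_sub_norm_le ((A x (r/2)).contLinear) ((A x r).contLinear)
        rw [norm_sub_rev] at t0
        have t1 : ‖(A x r).contLinear - (A x (r/2)).contLinear‖ ≤ ε * ‖(A x r).contLinear‖ :=
          hC.trans (mul_le_mul_of_nonneg_left hmin2 hε.le)
        have t2 : ε * ‖(A x r).contLinear‖ ≤ a * ‖(A x r).contLinear‖ :=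
          mul_le_mul_of_nonneg_right hεa (norm_nonneg _)
        have t3 : (1 + a) * ‖(A x r).contLinear‖ = ‖(A x r).contLinear‖ + a * ‖(A x r).contLinear‖ := by ring
        linarith
      have hDk : (0:ℝ) ≤ (1+a)^k := by positivity
      constructor
      · constructor
        · calc ‖(A x r).contLinear‖ ≤ (1 + a) * L' := hLr1
            _ ≤ (1 + a) * ((1+a)^k * ‖(A x s).contLinear‖) :=
                mul_le_mul_of_nonneg_left ih1 hP0
            _ = (1+a)^(k+1) * ‖(A x s).contLinear‖ := by ring
        · calc ‖(A x s).contLinear‖ ≤ (1+a)^k * L' := ih2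
            _ ≤ (1+a)^k * ((1 + a) * ‖(A x r).contLinear‖) :=
                mul_le_mul_of_nonneg_left hLr2 hDk
            _ = (1+a)^(k+1) * ‖(A x r).contLinear‖ := by ring
      · intro z
        have hdz : (0:ℝ) ≤ dist z x := dist_nonneg
        have tri : dist ((A x r) z) ((A x s) z) ≤
            dist ((A x r) z) ((A x (r/2)) z) + dist ((A x (r/2)) z) ((A x s) z) :=
          dist_triangle _ _ _
        have b1 : dist ((A x r) z) ((A x (r/2)) z) ≤
            ε * (1+a)^(k+1) * ‖(A x s).contLinear‖ * (2 * r + dist z x) := by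
          have hd' := hd z
          have e1 : ε * ‖(A x r).contLinear‖ * r + ε * L' * (r/2)
              + ε * (min ‖(A x r).contLinear‖ L') * dist z x
              ≤ ε * L' * ((1 + a) * (2 * r + dist z x)) := by
            have e1a : ε * ‖(A x r).contLinear‖ * r ≤ ε * ((1 + a) * L') * r :=
              mul_le_mul_of_nonneg_right (mul_le_mul_of_nonneg_left hLr1 hε.le) hr.le
            have e1b : ε * (min ‖(A x r).contLinear‖ L') * dist z x ≤ ε * L' * dist z x :=
              mul_le_mul_of_nonneg_right (mul_le_mul_of_nonneg_left hmin1 hε.le) hdz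
            have ha0 : (0:ℝ) ≤ a := by linarith
            nlinarith [mul_nonneg (mul_nonneg ha0 (mul_nonneg hε.le hL'0)) hdz,
              mul_nonneg (mul_nonneg ha0 (mul_nonneg hε.le hL'0)) hr.le,
              mul_nonneg (mul_nonneg hε.le hL'0) hr.le]
          have e2 : ε * L' * ((1 + a) * (2 * r + dist z x)) ≤
              ε * ((1+a)^k * ‖(A x s).contLinear‖) * ((1 + a) * (2 * r + dist z x)) := by
            apply mul_le_mul_of_nonneg_right (mul_le_mul_of_nonneg_left ih1 hε.le)
            positivity
          calc dist ((A x r) z) ((A x (r/2)) z)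
              ≤ ε * ‖(A x r).contLinear‖ * r + ε * L' * (r/2)
                + ε * (min ‖(A x r).contLinear‖ L') * dist z x := hd' 
            _ ≤ ε * ((1+a)^k * ‖(A x s).contLinear‖) * ((1 + a) * (2 * r + dist z x)) :=
                e1.trans e2
            _ = ε * (1+a)^(k+1) * ‖(A x s).contLinear‖ * (2 * r + dist z x) := by ring
        have b2 : dist ((A x (r/2)) z) ((A x s) z) ≤
            k * ε * (1+a)^(k+1) * ‖(A x s).contLinear‖ * (2 * r + dist z x) := by
          refine (ihd z).trans ?_
          gcongr
          linarith
        have hpow2 : ε * (1+a)^(k+1) * ‖(A x s).contLinear‖ * (2 * r + dist z x)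
            ≤ ε * (1+a)^(k+2) * ‖(A x s).contLinear‖ * (2 * r + dist z x) := by
          gcongr
          · omega
        have hk0 : (0:ℝ) ≤ (k:ℝ) := Nat.cast_nonneg k
        push_cast
        have hb2' : (k:ℝ) * ε * (1+a)^(k+1) * ‖(A x s).contLinear‖ * (2 * r + dist z x)
            ≤ (k:ℝ) * ε * (1+a)^(k+2) * ‖(A x s).contLinear‖ * (2 * r + dist z x) := by
          gcongr
          · omega
        have : (↑k + 1) * ε * (1 + a) ^ (k + 1 + 1) * ‖(A x s).contLinear‖ * (2 * r + dist z x)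
            = (k:ℝ) * ε * (1+a)^(k+2) * ‖(A x s).contLinear‖ * (2 * r + dist z x)
              + ε * (1+a)^(k+2) * ‖(A x s).contLinear‖ * (2 * r + dist z x) := by ring
        rw [this]
        linarith

lemma aux_infDist_pair {n : ℕ} (z x y : EuclideanSpace ℝ (Fin n)) :
    infDist z {x, y} = min (dist z x) (dist z y) := by
  rw [infDist, Set.insert_eq, EMetric.infEdist_union, EMetric.infEdist_singleton,
    EMetric.infEdist_singleton, dist_edist, dist_edist]
  exact ENNReal.toReal_min (edist_ne_top _ _) (edist_ne_top _ _)

/-- For every `a ≥ 1` there is a constant `C = C(a)` such that: whenever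
`(f,E,A)` is `ε`-almost affine with `ε ≤ a`, `x, y ∈ E`, `r, s > 0` satisfy
`|x−y| ≤ a·max(r,s)` and `τ(x,r,y,s) = max(r,s,2|x−y|)/min(r,s) ≤ a`, and `z ∈ ℝⁿ` satisfies
`dist(z,{x,y}) ≤ a·max(r,s)`, then
`|A_{x,r} z − A_{y,s} z| ≤ C·ε·min(‖A'_{x,r}‖,‖A'_{y,s}‖)·max(r,s)`. -/
theorem almostAffine_pointwise_comparison (a : ℝ) (ha : 1 ≤ a) :
    ∃ C : ℝ, 0 < C ∧
      ∀ (n N : ℕ) (f : EuclideanSpace ℝ (Fin n) → EuclideanSpace ℝ (Fin N))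
        (E : Set (EuclideanSpace ℝ (Fin n)))
        (A : EuclideanSpace ℝ (Fin n) → ℝ →
          ContinuousAffineMap ℝ (EuclideanSpace ℝ (Fin n)) (EuclideanSpace ℝ (Fin N)))
        (ε : ℝ), 0 < ε → ε ≤ a → IsAlmostAffine n N f E A ε →
        ∀ x ∈ E, ∀ y ∈ E, ∀ r s : ℝ, 0 < r → 0 < s →
          dist x y ≤ a * max r s →
          max (max r s) (2 * dist x y) / min r s ≤ a →
          ∀ z : EuclideanSpace ℝ (Fin n),
            Metric.infDist z {x, y} ≤ a * max r s →
            dist ((A x r) z) ((A y s) z) ≤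
              C * ε * min ‖(A x r).contLinear‖ ‖(A y s).contLinear‖ * max r s := by
  have ha0 : (0:ℝ) < a := by linarith
  obtain ⟨k, hk⟩ := pow_unbounded_of_one_lt (a ^ 2) (by norm_num : (1:ℝ) < 2)
  refine ⟨4 * a * (2 * k + 1) * (1 + a) ^ (3 * k + 2), by positivity, ?_⟩
  intro n N f E A ε hε hεa h x hx y hy r s hr hs hxy hτ z hz
  have hP : (1:ℝ) ≤ 1 + a := by linarith
  have hP0 : (0:ℝ) ≤ 1 + a := by linarith
  have hPk : (0:ℝ) ≤ (1 + a) ^ k := by positivity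
  have hm : 0 < min r s := lt_min hr hs
  have hM : 0 < max r s := lt_max_iff.2 (Or.inl hr)
  have hR : 0 < a * max r s := by positivity
  have hMam : max r s ≤ a * min r s :=
    (le_max_left _ _).trans ((div_le_iff₀ hm).mp hτ)
  have hrR : r ≤ a * max r s :=
    (le_max_left r s).trans (le_mul_of_one_le_left hM.le ha)
  have hsR : s ≤ a * max r s :=
    (le_max_right r s).trans (le_mul_of_one_le_left hM.le ha)
  have hRm : a * max r s ≤ 2 ^ k * min r s := by
    calc a * max r s ≤ a * (a * min r s) := mul_le_mul_of_nonneg_left hMam ha0.le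
    _ = a ^ 2 * min r s := by ring
    _ ≤ 2 ^ k * min r s := mul_le_mul_of_nonneg_right hk.le hm.le
  have hRr : a * max r s ≤ 2 ^ k * r :=
    hRm.trans (mul_le_mul_of_nonneg_left (min_le_left _ _) (by positivity))
  have hRs : a * max r s ≤ 2 ^ k * s :=
    hRm.trans (mul_le_mul_of_nonneg_left (min_le_right _ _) (by positivity))
  obtain ⟨⟨cX1, cX2⟩, cXd⟩ := aux_chain h hε ha hεa k x hx r (a * max r s) hr hrR hRr
  obtain ⟨⟨cY1, cY2⟩, cYd⟩ := aux_chain h hε ha hεa k y hy s (a * max r s) hs hsR hRs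
  obtain ⟨hCm, hmd⟩ := aux_step h hε.le hx hy hR hR hxy
    (by rw [div_self hR.ne']; norm_num) (by rw [div_self hR.ne']; norm_num)
  set Lxr := ‖(A x r).contLinear‖ with hLxr
  set Lys := ‖(A y s).contLinear‖ with hLys
  set LxR := ‖(A x (a * max r s)).contLinear‖ with hLxR
  set LyR := ‖(A y (a * max r s)).contLinear‖ with hLyR
  have hμ0 : (0:ℝ) ≤ min Lxr Lys := le_min (norm_nonneg _) (norm_nonneg _)
  have hLxr0 : (0:ℝ) ≤ Lxr := norm_nonneg _
  have hLys0 : (0:ℝ) ≤ Lys := norm_nonneg _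
  have mLx : LxR ≤ (1 + a) * LyR := by
    have t0 := norm_sub_norm_le ((A x (a * max r s)).contLinear) ((A y (a * max r s)).contLinear)
    have t1 : ‖(A x (a * max r s)).contLinear - (A y (a * max r s)).contLinear‖ ≤ ε * LyR :=
      hCm.trans (mul_le_mul_of_nonneg_left (min_le_right _ _) hε.le)
    have t2 : ε * LyR ≤ a * LyR := mul_le_mul_of_nonneg_right hεa (norm_nonneg _)
    have t3 : (1 + a) * LyR = LyR + a * LyR := by ring
    linarith
  have mLy : LyR ≤ (1 + a) * LxR := by
    have t0 := norm_sub_norm_le ((A y (a * max r s)).contLinear) ((A x (a * max r s)).contLinear)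
    rw [norm_sub_rev] at t0
    have t1 : ‖(A x (a * max r s)).contLinear - (A y (a * max r s)).contLinear‖ ≤ ε * LxR :=
      hCm.trans (mul_le_mul_of_nonneg_left (min_le_left _ _) hε.le)
    have t2 : ε * LxR ≤ a * LxR := mul_le_mul_of_nonneg_right hεa (norm_nonneg _)
    have t3 : (1 + a) * LxR = LxR + a * LxR := by ring
    linarith
  have e1 : Lxr ≤ (1 + a) ^ (2 * k + 1) * Lys := by
    calc Lxr ≤ (1 + a) ^ k * LxR := cX2
    _ ≤ (1 + a) ^ k * ((1 + a) * LyR) := mul_le_mul_of_nonneg_left mLx hPk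
    _ ≤ (1 + a) ^ k * ((1 + a) * ((1 + a) ^ k * Lys)) := by
        apply mul_le_mul_of_nonneg_left _ hPk
        exact mul_le_mul_of_nonneg_left cY1 hP0
    _ = (1 + a) ^ (2 * k + 1) * Lys := by ring
  have e2 : Lys ≤ (1 + a) ^ (2 * k + 1) * Lxr := by
    calc Lys ≤ (1 + a) ^ k * LyR := cY2
    _ ≤ (1 + a) ^ k * ((1 + a) * LxR) := mul_le_mul_of_nonneg_left mLy hPk
    _ ≤ (1 + a) ^ k * ((1 + a) * ((1 + a) ^ k * Lxr)) := by
        apply mul_le_mul_of_nonneg_left _ hPk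
        exact mul_le_mul_of_nonneg_left cX1 hP0
    _ = (1 + a) ^ (2 * k + 1) * Lxr := by ring
  have hone : (1:ℝ) ≤ (1 + a) ^ (2 * k + 1) := by
    calc (1:ℝ) = 1 ^ (2 * k + 1) := (one_pow _).symm
    _ ≤ (1 + a) ^ (2 * k + 1) := pow_le_pow_left₀ (by norm_num) hP _
  have hLxrμ : Lxr ≤ (1 + a) ^ (2 * k + 1) * min Lxr Lys := by
    rcases le_total Lxr Lys with h' | h'
    · rw [min_eq_left h']; exact le_mul_of_one_le_left hLxr0 hone
    · rw [min_eq_right h']; exact e1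
  have hLysμ : Lys ≤ (1 + a) ^ (2 * k + 1) * min Lxr Lys := by
    rcases le_total Lxr Lys with h' | h'
    · rw [min_eq_left h']; exact e2
    · rw [min_eq_right h']; exact le_mul_of_one_le_left hLys0 hone
  have hLxRμ : LxR ≤ (1 + a) ^ (3 * k + 1) * min Lxr Lys := by
    calc LxR ≤ (1 + a) ^ k * Lxr := cX1
    _ ≤ (1 + a) ^ k * ((1 + a) ^ (2 * k + 1) * min Lxr Lys) :=
        mul_le_mul_of_nonneg_left hLxrμ hPk
    _ = (1 + a) ^ (3 * k + 1) * min Lxr Lys := by ring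
  have hLyRμ : LyR ≤ (1 + a) ^ (3 * k + 1) * min Lxr Lys := by
    calc LyR ≤ (1 + a) ^ k * Lys := cY1
    _ ≤ (1 + a) ^ k * ((1 + a) ^ (2 * k + 1) * min Lxr Lys) :=
        mul_le_mul_of_nonneg_left hLysμ hPk
    _ = (1 + a) ^ (3 * k + 1) * min Lxr Lys := by ring
  -- geometry
  have hpair : min (dist z x) (dist z y) ≤ a * max r s := by
    rw [← aux_infDist_pair]; exact hz
  have hdzx : dist z x ≤ 2 * (a * max r s) := by
    rcases le_total (dist z x) (dist z y) with h' | h'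
    · rw [min_eq_left h'] at hpair; linarith
    · rw [min_eq_right h'] at hpair
      calc dist z x ≤ dist z y + dist y x := dist_triangle _ _ _
      _ ≤ a * max r s + a * max r s := by rw [dist_comm y x]; exact add_le_add hpair hxy
      _ = 2 * (a * max r s) := by ring
  have hdzy : dist z y ≤ 2 * (a * max r s) := by
    rcases le_total (dist z x) (dist z y) with h' | h'
    · rw [min_eq_left h'] at hpair
      calc dist z y ≤ dist z x + dist x y := dist_triangle _ _ _
      _ ≤ a * max r s + a * max r s := add_le_add hpair hxy
      _ = 2 * (a * max r s) := by ring
    · rw [min_eq_right h'] at hpair; linarith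
  have hgx : 2 * (a * max r s) + dist z x ≤ 4 * (a * max r s) := by linarith
  have hgy : 2 * (a * max r s) + dist z y ≤ 4 * (a * max r s) := by linarith
  -- three pieces
  have hkεP : (0:ℝ) ≤ (k:ℝ) * ε * (1 + a) ^ (k + 1) := by positivity
  have hT1 : dist ((A x r) z) ((A x (a * max r s)) z) ≤
      4 * (k:ℝ) * (1 + a) ^ (3 * k + 2) * (ε * min Lxr Lys * (a * max r s)) := by
    rw [dist_comm]
    refine (cXd z).trans ?_
    calc (k:ℝ) * ε * (1 + a) ^ (k + 1) * Lxr * (2 * (a * max r s) + dist z x)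
        ≤ (k:ℝ) * ε * (1 + a) ^ (k + 1) * ((1 + a) ^ (2 * k + 1) * min Lxr Lys)
            * (4 * (a * max r s)) := by
          apply mul_le_mul _ hgx (by positivity) (by positivity)
          exact mul_le_mul_of_nonneg_left hLxrμ hkεP
      _ = 4 * (k:ℝ) * (1 + a) ^ (3 * k + 2) * (ε * min Lxr Lys * (a * max r s)) := by ring
  have hT3 : dist ((A y (a * max r s)) z) ((A y s) z) ≤
      4 * (k:ℝ) * (1 + a) ^ (3 * k + 2) * (ε * min Lxr Lys * (a * max r s)) := by
    refine (cYd z).trans ?_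
    calc (k:ℝ) * ε * (1 + a) ^ (k + 1) * Lys * (2 * (a * max r s) + dist z y)
        ≤ (k:ℝ) * ε * (1 + a) ^ (k + 1) * ((1 + a) ^ (2 * k + 1) * min Lxr Lys)
            * (4 * (a * max r s)) := by
          apply mul_le_mul _ hgy (by positivity) (by positivity)
          exact mul_le_mul_of_nonneg_left hLysμ hkεP
      _ = 4 * (k:ℝ) * (1 + a) ^ (3 * k + 2) * (ε * min Lxr Lys * (a * max r s)) := by ring
  have hT2 : dist ((A x (a * max r s)) z) ((A y (a * max r s)) z) ≤
      4 * (1 + a) ^ (3 * k + 2) * (ε * min Lxr Lys * (a * max r s)) := by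
    refine (hmd z).trans ?_
    have t1 : ε * LxR * (a * max r s) ≤
        ε * ((1 + a) ^ (3 * k + 1) * min Lxr Lys) * (a * max r s) :=
      mul_le_mul_of_nonneg_right (mul_le_mul_of_nonneg_left hLxRμ hε.le) hR.le
    have t2 : ε * LyR * (a * max r s) ≤
        ε * ((1 + a) ^ (3 * k + 1) * min Lxr Lys) * (a * max r s) :=
      mul_le_mul_of_nonneg_right (mul_le_mul_of_nonneg_left hLyRμ hε.le) hR.le
    have t3 : ε * min LxR LyR * dist z x ≤
        ε * ((1 + a) ^ (3 * k + 1) * min Lxr Lys) * (2 * (a * max r s)) := by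
      apply mul_le_mul _ hdzx dist_nonneg _
      · exact mul_le_mul_of_nonneg_left ((min_le_left _ _).trans hLxRμ) hε.le
      · have : (0:ℝ) ≤ (1 + a) ^ (3 * k + 1) := by positivity
        exact mul_nonneg hε.le (mul_nonneg this hμ0)
    calc ε * LxR * (a * max r s) + ε * LyR * (a * max r s) + ε * min LxR LyR * dist z x
        ≤ ε * ((1 + a) ^ (3 * k + 1) * min Lxr Lys) * (a * max r s)
          + ε * ((1 + a) ^ (3 * k + 1) * min Lxr Lys) * (a * max r s)
          + ε * ((1 + a) ^ (3 * k + 1) * min Lxr Lys) * (2 * (a * max r s)) :=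
        add_le_add (add_le_add t1 t2) t3
      _ = 4 * (1 + a) ^ (3 * k + 1) * (ε * min Lxr Lys * (a * max r s)) := by ring
      _ ≤ 4 * (1 + a) ^ (3 * k + 2) * (ε * min Lxr Lys * (a * max r s)) := by
          apply mul_le_mul_of_nonneg_right _ (by positivity)
          apply mul_le_mul_of_nonneg_left _ (by norm_num)
          exact pow_le_pow_right₀ hP (by omega)
  calc dist ((A x r) z) ((A y s) z)
      ≤ dist ((A x r) z) ((A x (a * max r s)) z)
        + dist ((A x (a * max r s)) z) ((A y (a * max r s)) z)
        + dist ((A y (a * max r s)) z) ((A y s) z) := dist_triangle4 _ _ _ _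
    _ ≤ 4 * (k:ℝ) * (1 + a) ^ (3 * k + 2) * (ε * min Lxr Lys * (a * max r s))
        + 4 * (1 + a) ^ (3 * k + 2) * (ε * min Lxr Lys * (a * max r s))
        + 4 * (k:ℝ) * (1 + a) ^ (3 * k + 2) * (ε * min Lxr Lys * (a * max r s)) :=
        add_le_add (add_le_add hT1 hT2) hT3
    _ = 4 * a * (2 * (k:ℝ) + 1) * (1 + a) ^ (3 * k + 2) * ε * min Lxr Lys * max r s := by ring
end
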